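/- arXiv:1012.5452 — 2 statements merged into one kernel-verified Lean document; each statement's English description precedes it below -/
import Mathlib

section
/- Let (u, ρ) be a smooth solution of the periodic two-component μ-Hunter-Saxton system on [0,∞). Then for every t ≥ 0 and every continuously differentiable 1-periodic function φ : ℝ → ℝ with ∫₀¹ (φ(y)² + φ′(y)²) dy ≤ 1, one has |∫₀¹ ρ_t(t,x) φ(x) dx| ≤ (|μ₀| + (√3/6) μ₁ + |γ|) μ₁. -/
open MeasureTheory Real Set Filter Function intervalIntegral

private lemma inf1 : ((⊤:ℕ∞) : WithTop ℕ∞) + 1 ≤ ((⊤:ℕ∞) : WithTop ℕ∞) := by norm_cast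
private lemma inf2 : (1 : WithTop ℕ∞) ≤ ((⊤:ℕ∞) : WithTop ℕ∞) := by norm_cast
private lemma inf3 : ((⊤:ℕ∞) : WithTop ℕ∞) ≠ 0 := by simp

lemma hasDerivAt_slice2 {G : ℝ × ℝ → ℝ} (hG : Differentiable ℝ G) (t x : ℝ) :
    HasDerivAt (fun x' => G (t, x')) (fderiv ℝ G (t, x) (0, 1)) x := by
  have h1 : HasDerivAt (fun x' : ℝ => ((t, x') : ℝ × ℝ)) (0, 1) x :=
    (hasDerivAt_const x t).prodMk (hasDerivAt_id x)
  exact (hG (t, x)).hasFDerivAt.comp_hasDerivAt x h1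

lemma hasDerivAt_slice1 {G : ℝ × ℝ → ℝ} (hG : Differentiable ℝ G) (t x : ℝ) :
    HasDerivAt (fun s => G (s, x)) (fderiv ℝ G (t, x) (1, 0)) t := by
  have h1 : HasDerivAt (fun s : ℝ => ((s, x) : ℝ × ℝ)) (1, 0) t :=
    (hasDerivAt_id t).prodMk (hasDerivAt_const t x)
  exact (hG (t, x)).hasFDerivAt.comp_hasDerivAt t h1

lemma contDiff_fderiv_apply {G : ℝ × ℝ → ℝ} (hG : ContDiff ℝ (⊤ : ℕ∞) G) (v : ℝ × ℝ) :
    ContDiff ℝ (⊤ : ℕ∞) (fun p => fderiv ℝ G p v) :=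
  (hG.fderiv_right inf1).clm_apply contDiff_const

lemma hasDerivAt_fderiv_apply_slice2 {G : ℝ × ℝ → ℝ} (hG : ContDiff ℝ (⊤ : ℕ∞) G)
    (v : ℝ × ℝ) (t x : ℝ) :
    HasDerivAt (fun x' => fderiv ℝ G (t, x') v)
      (fderiv ℝ (fderiv ℝ G) (t, x) (0, 1) v) x := by
  have hdG : Differentiable ℝ (fun p => fderiv ℝ G p v) :=
    (contDiff_fderiv_apply hG v).differentiable inf3
  have h := hasDerivAt_slice2 hdG t x
  have he : fderiv ℝ (fun p => fderiv ℝ G p v) (t, x) (0, 1)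
      = fderiv ℝ (fderiv ℝ G) (t, x) (0, 1) v := by
    have hd : DifferentiableAt ℝ (fderiv ℝ G) (t, x) :=
      ((hG.fderiv_right inf1).differentiable inf3) (t, x)
    rw [fderiv_clm_apply hd (differentiableAt_const v)]
    simp
  rwa [he] at h

lemma hasDerivAt_fderiv_apply_slice1 {G : ℝ × ℝ → ℝ} (hG : ContDiff ℝ (⊤ : ℕ∞) G)
    (v : ℝ × ℝ) (t x : ℝ) :
    HasDerivAt (fun s => fderiv ℝ G (s, x) v)
      (fderiv ℝ (fderiv ℝ G) (t, x) (1, 0) v) t := by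
  have hdG : Differentiable ℝ (fun p => fderiv ℝ G p v) :=
    (contDiff_fderiv_apply hG v).differentiable inf3
  have h := hasDerivAt_slice1 hdG t x
  have he : fderiv ℝ (fun p => fderiv ℝ G p v) (t, x) (1, 0)
      = fderiv ℝ (fderiv ℝ G) (t, x) (1, 0) v := by
    have hd : DifferentiableAt ℝ (fderiv ℝ G) (t, x) :=
      ((hG.fderiv_right inf1).differentiable inf3) (t, x)
    rw [fderiv_clm_apply hd (differentiableAt_const v)]
    simp
  rwa [he] at h

lemma second_symm {G : ℝ × ℝ → ℝ} (hG : ContDiff ℝ (⊤ : ℕ∞) G) (p v w : ℝ × ℝ) :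
    fderiv ℝ (fderiv ℝ G) p v w = fderiv ℝ (fderiv ℝ G) p w v :=
  second_derivative_symmetric (f := G)
    (fun y => (hG.differentiable inf3 y).hasFDerivAt)
    (((hG.fderiv_right inf1).differentiable inf3) p).hasFDerivAt v w


section curried
variable {g : ℝ → ℝ → ℝ} (hg : ContDiff ℝ (⊤ : ℕ∞) (uncurry g))
include hg

-- slice smoothness
lemma slice2_contDiff (t : ℝ) : ContDiff ℝ (⊤ : ℕ∞) (g t) := by
  have : g t = (uncurry g) ∘ (fun x => (t, x)) := rfl
  rw [this]
  exact hg.comp (contDiff_const.prodMk contDiff_id)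

lemma slice1_contDiff (x : ℝ) : ContDiff ℝ (⊤ : ℕ∞) (fun s => g s x) := by
  have : (fun s => g s x) = (uncurry g) ∘ (fun s => (s, x)) := rfl
  rw [this]
  exact hg.comp (contDiff_id.prodMk contDiff_const)

lemma pd2_eq (t x : ℝ) :
    deriv (g t) x = fderiv ℝ (uncurry g) (t, x) (0, 1) := by
  have h : HasDerivAt (fun x' => uncurry g (t, x')) (fderiv ℝ (uncurry g) (t, x) (0, 1)) x := by
    have h1 : HasDerivAt (fun x' : ℝ => ((t, x') : ℝ × ℝ)) (0, 1) x :=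
      (hasDerivAt_const x t).prodMk (hasDerivAt_id x)
    exact ((hg.differentiable inf3) (t, x)).hasFDerivAt.comp_hasDerivAt x h1
  exact h.deriv

lemma pd1_eq (t x : ℝ) :
    deriv (fun s => g s x) t = fderiv ℝ (uncurry g) (t, x) (1, 0) := by
  have h : HasDerivAt (fun s => uncurry g (s, x)) (fderiv ℝ (uncurry g) (t, x) (1, 0)) t := by
    have h1 : HasDerivAt (fun s : ℝ => ((s, x) : ℝ × ℝ)) (1, 0) t :=
      (hasDerivAt_id t).prodMk (hasDerivAt_const t x)
    exact ((hg.differentiable inf3) (t, x)).hasFDerivAt.comp_hasDerivAt t h1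
  exact h.deriv

lemma pd2_contDiff : ContDiff ℝ (⊤ : ℕ∞) (uncurry (fun t x => deriv (g t) x)) := by
  have he : uncurry (fun t x => deriv (g t) x) = fun p : ℝ × ℝ => fderiv ℝ (uncurry g) p (0, 1) := by
    funext p
    exact pd2_eq hg p.1 p.2
  rw [he]
  exact (hg.fderiv_right inf1).clm_apply contDiff_const

lemma pd1_contDiff : ContDiff ℝ (⊤ : ℕ∞) (uncurry (fun t x => deriv (fun s => g s x) t)) := by
  have he : uncurry (fun t x => deriv (fun s => g s x) t)
      = fun p : ℝ × ℝ => fderiv ℝ (uncurry g) p (1, 0) := by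
    funext p
    exact pd1_eq hg p.1 p.2
  rw [he]
  exact (hg.fderiv_right inf1).clm_apply contDiff_const

lemma clairaut (t x : ℝ) :
    deriv (fun x' => deriv (fun s => g s x') t) x = deriv (fun s => deriv (g s) x) t := by
  set G := uncurry g with hG
  have hdd : Differentiable ℝ (fderiv ℝ G) := (hg.fderiv_right inf1).differentiable inf3
  have hL : HasDerivAt (fun x' => fderiv ℝ G (t, x') (1, 0))
      (fderiv ℝ (fderiv ℝ G) (t, x) (0, 1) (1, 0)) x := by
    have hdG : Differentiable ℝ (fun p => fderiv ℝ G p ((1:ℝ), (0:ℝ))) :=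
      (((hg.fderiv_right inf1).clm_apply contDiff_const)).differentiable inf3
    have h1 : HasDerivAt (fun x' : ℝ => ((t, x') : ℝ × ℝ)) (0, 1) x :=
      (hasDerivAt_const x t).prodMk (hasDerivAt_id x)
    have h := (hdG (t, x)).hasFDerivAt.comp_hasDerivAt x h1
    have he : fderiv ℝ (fun p => fderiv ℝ G p ((1:ℝ), (0:ℝ))) (t, x) (0, 1)
        = fderiv ℝ (fderiv ℝ G) (t, x) (0, 1) (1, 0) := by
      rw [fderiv_clm_apply (hdd (t, x)) (differentiableAt_const _)]
      simp
    rwa [he] at h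
  have hR : HasDerivAt (fun s => fderiv ℝ G (s, x) (0, 1))
      (fderiv ℝ (fderiv ℝ G) (t, x) (1, 0) (0, 1)) t := by
    have hdG : Differentiable ℝ (fun p => fderiv ℝ G p ((0:ℝ), (1:ℝ))) :=
      (((hg.fderiv_right inf1).clm_apply contDiff_const)).differentiable inf3
    have h1 : HasDerivAt (fun s : ℝ => ((s, x) : ℝ × ℝ)) (1, 0) t :=
      (hasDerivAt_id t).prodMk (hasDerivAt_const t x)
    have h := (hdG (t, x)).hasFDerivAt.comp_hasDerivAt t h1
    have he : fderiv ℝ (fun p => fderiv ℝ G p ((0:ℝ), (1:ℝ))) (t, x) (1, 0)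
        = fderiv ℝ (fderiv ℝ G) (t, x) (1, 0) (0, 1) := by
      rw [fderiv_clm_apply (hdd (t, x)) (differentiableAt_const _)]
      simp
    rwa [he] at h
  have hsymm : fderiv ℝ (fderiv ℝ G) (t, x) (0, 1) (1, 0)
      = fderiv ℝ (fderiv ℝ G) (t, x) (1, 0) (0, 1) :=
    second_derivative_symmetric (f := G)
      (fun y => (hg.differentiable inf3 y).hasFDerivAt)
      (hdd (t, x)).hasFDerivAt _ _
  have hLe : (fun x' => deriv (fun s => g s x') t) = fun x' => fderiv ℝ G (t, x') (1, 0) := by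
    funext x'
    exact pd1_eq hg t x'
  have hRe : (fun s => deriv (g s) x) = fun s => fderiv ℝ G (s, x) (0, 1) := by
    funext s
    exact pd2_eq hg s x
  rw [hLe, hRe, hL.deriv, hR.deriv, hsymm]

end curried



-- differentiation under the interval integral, for smooth integrand
lemma hasDerivAt_param_int {F : ℝ → ℝ → ℝ}
    (hF : ContDiff ℝ (⊤ : ℕ∞) (uncurry F))
    (hF' : Continuous (uncurry fun s y => deriv (fun s' => F s' y) s)) (t : ℝ) :
    HasDerivAt (fun s => ∫ y in (0:ℝ)..1, F s y)
      (∫ y in (0:ℝ)..1, deriv (fun s => F s y) t) t := by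
  set F' : ℝ → ℝ → ℝ := fun s y => deriv (fun s' => F s' y) s with hF'def
  have hFc : Continuous (uncurry F) := hF.continuous
  -- bound on compact set
  obtain ⟨C, hC⟩ : ∃ C, ∀ p ∈ (Icc (t-1) (t+1) ×ˢ Icc (-1:ℝ) 2),
      ‖uncurry F' p‖ ≤ C :=
    (isCompact_Icc.prod isCompact_Icc).exists_bound_of_continuousOn hF'.continuousOn
  have key := intervalIntegral.hasDerivAt_integral_of_dominated_loc_of_deriv_le
    (F := F) (F' := F') (x₀ := t) (a := (0:ℝ)) (b := 1) (μ := volume)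
    (bound := fun _ => C) (s := Metric.ball t 1) (Metric.ball_mem_nhds t one_pos)
    ?_ ?_ ?_ ?_ ?_ ?_
  · exact key.2
  · filter_upwards with s
    exact (hFc.comp (continuous_const.prodMk continuous_id)).aestronglyMeasurable
  · exact ((hFc.comp (continuous_const.prodMk continuous_id)) :
      Continuous (fun y => F t y)).intervalIntegrable _ _
  · exact (hF'.comp (continuous_const.prodMk continuous_id) :
      Continuous (fun y => F' t y)).aestronglyMeasurable
  · filter_upwards with y hy s hs
    refine hC (s, y) ⟨?_, ?_⟩
    · have : |s - t| < 1 := by simpa [Real.dist_eq] using mem_ball_iff_norm.1 hs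
      constructor <;> [linarith [abs_lt.1 this |>.1]; linarith [abs_lt.1 this |>.2]]
    · rcases hy with ⟨h1, h2⟩
      rw [min_def, max_def] at *
      constructor <;> simp at h1 h2 <;> nlinarith [h1, h2]
  · exact intervalIntegrable_const
  · filter_upwards with y hy s hs
    have hd : DifferentiableAt ℝ (fun s' => F s' y) s := by
      have : ContDiff ℝ (⊤:ℕ∞) (fun s' => F s' y) := by
        have : (fun s' => F s' y) = (uncurry F) ∘ (fun s' => (s', y)) := rfl
        rw [this]; exact hF.comp (contDiff_id.prodMk contDiff_const)
      exact (this.differentiable inf3).differentiableAt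
    exact hd.hasDerivAt

-- FTC for periodic C¹ functions
lemma integral_deriv_per {f : ℝ → ℝ} (hf : ContDiff ℝ 1 f) (hp : ∀ x, f (x+1) = f x) :
    ∫ y in (0:ℝ)..1, deriv f y = 0 := by
  rw [intervalIntegral.integral_deriv_eq_sub
    (fun x _ => (hf.differentiable one_ne_zero).differentiableAt)
    ((hf.continuous_deriv le_rfl).intervalIntegrable _ _)]
  have := hp 0
  simp at this
  rw [this]; ring

-- integration by parts for periodic C¹ functions
lemma ibp_per {f g : ℝ → ℝ} (hf : ContDiff ℝ 1 f) (hg : ContDiff ℝ 1 g)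
    (hfp : ∀ x, f (x+1) = f x) (hgp : ∀ x, g (x+1) = g x) :
    ∫ y in (0:ℝ)..1, deriv f y * g y = -∫ y in (0:ℝ)..1, f y * deriv g y := by
  have h := intervalIntegral.integral_deriv_mul_eq_sub
    (u := f) (v := g) (u' := deriv f) (v' := deriv g) (a := (0:ℝ)) (b := 1)
    (fun x _ => ((hf.differentiable one_ne_zero) x).hasDerivAt)
    (fun x _ => ((hg.differentiable one_ne_zero) x).hasDerivAt)
    ((hf.continuous_deriv le_rfl).intervalIntegrable _ _)
    ((hg.continuous_deriv le_rfl).intervalIntegrable _ _)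
  have hf1 : f 1 = f 0 := by have := hfp 0; simpa using this
  have hg1 : g 1 = g 0 := by have := hgp 0; simpa using this
  rw [hf1, hg1, sub_self] at h
  have hsplit : ∫ y in (0:ℝ)..1, (deriv f y * g y + f y * deriv g y)
      = (∫ y in (0:ℝ)..1, deriv f y * g y) + ∫ y in (0:ℝ)..1, f y * deriv g y := by
    apply intervalIntegral.integral_add
    · exact ((hf.continuous_deriv le_rfl).mul (hg.continuous)).intervalIntegrable _ _
    · exact ((hf.continuous).mul (hg.continuous_deriv le_rfl)).intervalIntegrable _ _
  rw [hsplit] at h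
  linarith

-- Cauchy-Schwarz for interval integrals of continuous functions
lemma cauchy_schwarz_int {f g : ℝ → ℝ} {a b : ℝ} (hab : a ≤ b)
    (hf : Continuous f) (hg : Continuous g) :
    (∫ y in a..b, f y * g y)^2 ≤ (∫ y in a..b, f y^2) * (∫ y in a..b, g y^2) := by
  set A := ∫ y in a..b, f y^2 with hA
  set B := ∫ y in a..b, f y * g y with hB
  set C := ∫ y in a..b, g y^2 with hC
  have key : ∀ L : ℝ, 0 ≤ C * (L*L) + (2*B) * L + A := by
    intro L
    have h0 : 0 ≤ ∫ y in a..b, (f y + L * g y)^2 :=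
      intervalIntegral.integral_nonneg hab (fun y _ => sq_nonneg _)
    have he : (∫ y in a..b, (f y + L * g y)^2)
        = C * L^2 + 2*B*L + A := by
      have : ∀ y, (f y + L * g y)^2 = L^2 * g y^2 + (2*L) * (f y * g y) + f y^2 := by
        intro y; ring
      rw [intervalIntegral.integral_congr (fun y _ => this y)]
      rw [intervalIntegral.integral_add, intervalIntegral.integral_add,
        intervalIntegral.integral_const_mul, intervalIntegral.integral_const_mul]
      · ring
      · exact (continuous_const.mul (hg.pow 2)).intervalIntegrable _ _
      · exact (continuous_const.mul (hf.mul hg)).intervalIntegrable _ _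
      · exact ((continuous_const.mul (hg.pow 2)).add
          (continuous_const.mul (hf.mul hg))).intervalIntegrable _ _
      · exact (hf.pow 2).intervalIntegrable _ _
    linarith [he ▸ h0]
  have hd := discrim_le_zero key
  rw [discrim] at hd
  nlinarith [hd]
lemma sup_bound {f : ℝ → ℝ} (hf : ContDiff ℝ 1 f) (hp : ∀ x, f (x+1) = f x) (x : ℝ) :
    |f x - ∫ y in (0:ℝ)..1, f y|
      ≤ Real.sqrt 3 / 6 * Real.sqrt (∫ y in (0:ℝ)..1, (deriv f y)^2) := by
  have hper : Function.Periodic f 1 := hp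
  have hd : Differentiable ℝ f := hf.differentiable one_ne_zero
  have hdc : Continuous (deriv f) := hf.continuous_deriv le_rfl
  have hdper : Function.Periodic (deriv f) 1 := by
    intro y
    have h1 : (fun z => f (z + 1)) = f := funext hp
    rw [← deriv_comp_add_const f 1 y, h1]
  set a := x - 1/2 with ha
  set b := x + 1/2 with hb
  -- mean over [a,b]
  have hab1 : a + 1 = b := by rw [ha, hb]; ring
  have hmean : (∫ y in (0:ℝ)..1, f y) = ∫ y in a..b, f y := by
    have h := hper.intervalIntegral_add_eq 0 a
    rw [zero_add, hab1] at h
    exact h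
  have hQ : (∫ y in (0:ℝ)..1, (deriv f y)^2) = ∫ y in a..b, (deriv f y)^2 := by
    have hper2 : Function.Periodic (fun y => (deriv f y)^2) 1 := fun y => by
      simp [hdper y]
    have h := hper2.intervalIntegral_add_eq 0 a
    rw [zero_add, hab1] at h
    exact h
  have hax : a ≤ x := by rw [ha]; linarith
  have hxb : x ≤ b := by rw [hb]; linarith
  have hab : a ≤ b := le_trans hax hxb
  -- f x - mean as integral
  have hsub : f x - (∫ y in a..b, f y) = ∫ y in a..b, (f x - f y) := by
    rw [intervalIntegral.integral_sub (intervalIntegrable_const)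
      (hf.continuous.intervalIntegrable _ _)]
    rw [intervalIntegral.integral_const]
    rw [show b - a = 1 by rw [ha, hb]; ring]
    simp
  -- split
  have hsplit : (∫ y in a..b, (f x - f y))
      = (∫ y in a..x, (f x - f y)) + ∫ y in x..b, (f x - f y) := by
    rw [intervalIntegral.integral_add_adjacent_intervals] <;>
      exact ((continuous_const.sub hf.continuous).intervalIntegrable _ _)
  -- IBP on each piece
  have hibp1 : (∫ y in a..x, (f x - f y)) = ∫ y in a..x, (y - a) * deriv f y := by
    have h := intervalIntegral.integral_mul_deriv_eq_deriv_mul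
      (u := fun y => f x - f y) (u' := fun y => -deriv f y)
      (v := fun y => y - a) (v' := fun y => 1) (a := a) (b := x)
      (fun y _ => ((hd y).hasDerivAt.const_sub (f x)))
      (fun y _ => ((hasDerivAt_id y).sub_const a))
      ((hdc.neg).intervalIntegrable _ _)
      (continuous_const.intervalIntegrable _ _)
    simp only [mul_one, sub_self, mul_zero, zero_mul, sub_zero, zero_sub] at h
    rw [h]
    rw [← intervalIntegral.integral_neg]
    congr 1; funext y; ring
  have hibp2 : (∫ y in x..b, (f x - f y)) = ∫ y in x..b, (y - b) * deriv f y := by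
    have h := intervalIntegral.integral_mul_deriv_eq_deriv_mul
      (u := fun y => f x - f y) (u' := fun y => -deriv f y)
      (v := fun y => y - b) (v' := fun y => 1) (a := x) (b := b)
      (fun y _ => ((hd y).hasDerivAt.const_sub (f x)))
      (fun y _ => ((hasDerivAt_id y).sub_const b))
      ((hdc.neg).intervalIntegrable _ _)
      (continuous_const.intervalIntegrable _ _)
    simp only [mul_one, sub_self, mul_zero, zero_mul, sub_zero, zero_sub] at h
    rw [h]
    rw [← intervalIntegral.integral_neg]
    congr 1; funext y; ring
  -- kernel integrals
  have hk1 : (∫ y in a..x, (y - a)^2) = (x - a)^3 / 3 := by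
    rw [show (∫ y in a..x, (y - a)^2) = ∫ y in a..x, (fun z : ℝ => z^2) (y - a) from rfl,
      intervalIntegral.integral_comp_sub_right (fun z : ℝ => z^2) a]
    simp [integral_pow]
    norm_num
  have hk2 : (∫ y in x..b, (y - b)^2) = (b - x)^3 / 3 := by
    rw [show (∫ y in x..b, (y - b)^2) = ∫ y in x..b, (fun z : ℝ => z^2) (y - b) from rfl,
      intervalIntegral.integral_comp_sub_right (fun z : ℝ => z^2) b]
    simp [integral_pow]
    ring
  -- Cauchy-Schwarz on each piece
  set S1 := ∫ y in a..x, (deriv f y)^2 with hS1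
  set S2 := ∫ y in x..b, (deriv f y)^2 with hS2
  have hS1nn : 0 ≤ S1 := intervalIntegral.integral_nonneg hax (fun y _ => sq_nonneg _)
  have hS2nn : 0 ≤ S2 := intervalIntegral.integral_nonneg hxb (fun y _ => sq_nonneg _)
  have hcs1 : (∫ y in a..x, (y - a) * deriv f y)^2 ≤ (1/24) * S1 := by
    have := cauchy_schwarz_int (f := fun y => y - a) (g := deriv f) hax
      (continuous_id.sub continuous_const) hdc
    rw [hk1] at this
    calc (∫ y in a..x, (y - a) * deriv f y)^2 ≤ (x-a)^3/3 * S1 := this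
      _ ≤ (1/24) * S1 := by
          apply mul_le_mul_of_nonneg_right _ hS1nn
          rw [show x - a = 1/2 by rw [ha]; ring]; norm_num
  have hcs2 : (∫ y in x..b, (y - b) * deriv f y)^2 ≤ (1/24) * S2 := by
    have := cauchy_schwarz_int (f := fun y => y - b) (g := deriv f) hxb
      (continuous_id.sub continuous_const) hdc
    rw [hk2] at this
    calc (∫ y in x..b, (y - b) * deriv f y)^2 ≤ (b-x)^3/3 * S2 := this
      _ ≤ (1/24) * S2 := by
          apply mul_le_mul_of_nonneg_right _ hS2nn
          rw [show b - x = 1/2 by rw [hb]; ring]; norm_num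
  -- combine
  have hsum : S1 + S2 = ∫ y in a..b, (deriv f y)^2 := by
    rw [hS1, hS2, intervalIntegral.integral_add_adjacent_intervals] <;>
      exact ((hdc.pow 2).intervalIntegrable _ _)
  set B1 := ∫ y in a..x, (y - a) * deriv f y
  set B2 := ∫ y in x..b, (y - b) * deriv f y
  have hBsq : (B1 + B2)^2 ≤ (1/12) * (S1 + S2) := by nlinarith [sq_nonneg (B1 - B2)]
  have hfin : |f x - ∫ y in (0:ℝ)..1, f y| = |B1 + B2| := by
    rw [hmean, hsub, hsplit, hibp1, hibp2]
  rw [hfin, hQ, ← hsum]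
  have hQnn : 0 ≤ S1 + S2 := by linarith
  have h1 : |B1 + B2| = Real.sqrt ((B1+B2)^2) := (Real.sqrt_sq_eq_abs _).symm
  rw [h1]
  calc Real.sqrt ((B1+B2)^2) ≤ Real.sqrt ((1/12) * (S1+S2)) := Real.sqrt_le_sqrt hBsq
    _ = Real.sqrt 3 / 6 * Real.sqrt (S1 + S2) := by
        rw [Real.sqrt_mul (by norm_num)]
        congr 1
        rw [show (1/12 : ℝ) = 3 / 36 by norm_num, Real.sqrt_div' 3 (by norm_num),
          show Real.sqrt 36 = 6 from by
            rw [show (36:ℝ) = 6^2 by norm_num, Real.sqrt_sq (by norm_num)]]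

-- derivative of a periodic function is periodic (no differentiability needed)
lemma per_deriv {f : ℝ → ℝ} (hp : ∀ x, f (x+1) = f x) : ∀ x, deriv f (x+1) = deriv f x := by
  intro y
  have h1 : (fun z => f (z + 1)) = f := funext hp
  rw [← deriv_comp_add_const f 1 y, h1]

lemma int_self_deriv_zero {f : ℝ → ℝ} (hf : ContDiff ℝ 1 f) (hp : ∀ x, f (x+1) = f x) :
    ∫ y in (0:ℝ)..1, f y * deriv f y = 0 := by
  have h := ibp_per hf hf hp hp
  have h2 : (∫ y in (0:ℝ)..1, deriv f y * f y) = ∫ y in (0:ℝ)..1, f y * deriv f y :=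
    intervalIntegral.integral_congr (fun y _ => mul_comm _ _)
  rw [h2] at h
  linarith

lemma cont_slice2 {g : ℝ → ℝ → ℝ} (hg : Continuous (uncurry g)) (t : ℝ) :
    Continuous (g t) := hg.comp (continuous_const.prodMk continuous_id)

lemma cont_slice1 {g : ℝ → ℝ → ℝ} (hg : Continuous (uncurry g)) (x : ℝ) :
    Continuous (fun s => g s x) := hg.comp (continuous_id.prodMk continuous_const)

section system
variable {γ : ℝ} {u ρ : ℝ → ℝ → ℝ}

lemma mean_hasDerivAt (hu : ContDiff ℝ (⊤ : ℕ∞) (uncurry u)) (t : ℝ) :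
    HasDerivAt (fun s => ∫ y in (0:ℝ)..1, u s y)
      (∫ y in (0:ℝ)..1, deriv (fun s => u s y) t) t :=
  hasDerivAt_param_int hu (pd1_contDiff hu).continuous t

lemma mean_deriv_zero
    (hu : ContDiff ℝ (⊤ : ℕ∞) (uncurry u)) (hρ : ContDiff ℝ (⊤ : ℕ∞) (uncurry ρ))
    (huper : ∀ t x : ℝ, u t (x + 1) = u t x) (hρper : ∀ t x : ℝ, ρ t (x + 1) = ρ t x)
    (heq1 : ∀ t x : ℝ, 0 ≤ t →
      deriv (fun s => ∫ y in (0:ℝ)..1, u s y) t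
        - deriv (fun s => deriv (deriv (u s)) x) t
      = 2 * (∫ y in (0:ℝ)..1, u t y) * deriv (u t) x
        - 2 * deriv (u t) x * deriv (deriv (u t)) x
        - u t x * deriv (deriv (deriv (u t))) x
        + ρ t x * deriv (ρ t) x
        - γ * deriv (deriv (deriv (u t))) x)
    {t : ℝ} (ht : 0 ≤ t) :
    deriv (fun s => ∫ y in (0:ℝ)..1, u s y) t = 0 := by
  have hux : ContDiff ℝ (⊤ : ℕ∞) (uncurry (fun a b => deriv (u a) b)) := pd2_contDiff hu
  have huxx : ContDiff ℝ (⊤ : ℕ∞) (uncurry (fun a b => deriv (deriv (u a)) b)) :=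
    pd2_contDiff hux
  have hcu : ∀ s, ContDiff ℝ 1 (u s) := fun s => (slice2_contDiff hu s).of_le inf2
  have hcux : ∀ s, ContDiff ℝ 1 (deriv (u s)) := fun s => (slice2_contDiff hux s).of_le inf2
  have hcuxx : ∀ s, ContDiff ℝ 1 (deriv (deriv (u s))) :=
    fun s => (slice2_contDiff huxx s).of_le inf2
  have hcρ : ∀ s, ContDiff ℝ 1 (ρ s) := fun s => (slice2_contDiff hρ s).of_le inf2
  have hpux : ∀ s x, deriv (u s) (x+1) = deriv (u s) x := fun s => per_deriv (huper s)
  have hpuxx : ∀ s x, deriv (deriv (u s)) (x+1) = deriv (deriv (u s)) x :=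
    fun s => per_deriv (hpux s)
  set m : ℝ → ℝ := fun s => ∫ y in (0:ℝ)..1, u s y with hm
  set mt : ℝ := ∫ y in (0:ℝ)..1, u t y with hmt
  set wt : ℝ → ℝ := fun x => deriv (fun s => deriv (deriv (u s)) x) t with hwt
  -- ∫ wt = 0
  have hwt0 : (∫ x in (0:ℝ)..1, wt x) = 0 := by
    have hF := hasDerivAt_param_int (F := fun a b => deriv (deriv (u a)) b) huxx
      (pd1_contDiff huxx).continuous t
    have hzero : (fun s => ∫ y in (0:ℝ)..1, deriv (deriv (u s)) y) = fun _ => (0:ℝ) :=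
      funext fun s => integral_deriv_per (hcux s) (hpux s)
    rw [hzero] at hF
    exact ((hasDerivAt_const t (0:ℝ)).unique hF).symm
  -- antiderivative F for the RHS
  set F : ℝ → ℝ := fun x => 2*mt*u t x + (ρ t x)^2/2 - γ*deriv (deriv (u t)) x
      - u t x * deriv (deriv (u t)) x - (deriv (u t) x)^2/2 with hF
  have hFd : ∀ x, HasDerivAt F
      (2 * mt * deriv (u t) x - 2 * deriv (u t) x * deriv (deriv (u t)) x
        - u t x * deriv (deriv (deriv (u t))) x + ρ t x * deriv (ρ t) x
        - γ * deriv (deriv (deriv (u t))) x) x := by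
    intro x
    have hu' : HasDerivAt (u t) (deriv (u t) x) x :=
      (((hcu t).differentiable one_ne_zero) x).hasDerivAt
    have hux' : HasDerivAt (deriv (u t)) (deriv (deriv (u t)) x) x :=
      (((hcux t).differentiable one_ne_zero) x).hasDerivAt
    have huxx' : HasDerivAt (deriv (deriv (u t))) (deriv (deriv (deriv (u t))) x) x :=
      (((hcuxx t).differentiable one_ne_zero) x).hasDerivAt
    have hρ' : HasDerivAt (ρ t) (deriv (ρ t) x) x :=
      (((hcρ t).differentiable one_ne_zero) x).hasDerivAt
    have h := ((((hu'.const_mul (2*mt)).add ((hρ'.pow 2).div_const 2)).sub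
      (huxx'.const_mul γ)).sub (hu'.mul huxx')).sub ((hux'.pow 2).div_const 2)
    refine h.congr_deriv ?_
    push_cast; ring
  have hFC1 : ContDiff ℝ 1 F := by
    exact ((((contDiff_const.mul (hcu t)).add (((hcρ t).pow 2).div_const 2)).sub
      (contDiff_const.mul (hcuxx t))).sub ((hcu t).mul (hcuxx t))).sub
      (((hcux t).pow 2).div_const 2)
  have hFper : ∀ x, F (x+1) = F x := by
    intro x
    simp only [hF]
    rw [huper t x, hρper t x, hpuxx t x, hpux t x]
  have hFint0 : (∫ x in (0:ℝ)..1, deriv F x) = 0 := integral_deriv_per hFC1 hFper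
  -- pointwise identity from the PDE
  have key' : ∀ x, deriv m t = deriv F x + wt x := by
    intro x
    have h := heq1 t x ht
    rw [(hFd x).deriv]
    simp only [hm, hmt, hwt] at *
    linarith
  have hwtc : Continuous wt :=
    cont_slice2 (pd1_contDiff huxx).continuous t
  have h5 : (∫ x in (0:ℝ)..1, (deriv F x + wt x)) = deriv m t := by
    rw [intervalIntegral.integral_congr (g := fun _ => deriv m t) (fun x _ => (key' x).symm)]
    simp
  have h6 : (∫ x in (0:ℝ)..1, (deriv F x + wt x)) = 0 := by
    rw [intervalIntegral.integral_add
      ((hFC1.continuous_deriv le_rfl).intervalIntegrable _ _)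
      (hwtc.intervalIntegrable _ _), hFint0, hwt0]
    ring
  rw [← h5, h6]

lemma mean_const
    (hu : ContDiff ℝ (⊤ : ℕ∞) (uncurry u)) (hρ : ContDiff ℝ (⊤ : ℕ∞) (uncurry ρ))
    (huper : ∀ t x : ℝ, u t (x + 1) = u t x) (hρper : ∀ t x : ℝ, ρ t (x + 1) = ρ t x)
    (heq1 : ∀ t x : ℝ, 0 ≤ t →
      deriv (fun s => ∫ y in (0:ℝ)..1, u s y) t
        - deriv (fun s => deriv (deriv (u s)) x) t
      = 2 * (∫ y in (0:ℝ)..1, u t y) * deriv (u t) x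
        - 2 * deriv (u t) x * deriv (deriv (u t)) x
        - u t x * deriv (deriv (deriv (u t))) x
        + ρ t x * deriv (ρ t) x
        - γ * deriv (deriv (deriv (u t))) x)
    {t : ℝ} (ht : 0 ≤ t) :
    (∫ y in (0:ℝ)..1, u t y) = ∫ y in (0:ℝ)..1, u 0 y := by
  set m : ℝ → ℝ := fun s => ∫ y in (0:ℝ)..1, u s y with hm
  have hdm : ∀ s, HasDerivAt m (∫ y in (0:ℝ)..1, deriv (fun s' => u s' y) s) s :=
    fun s => mean_hasDerivAt hu s
  have hcont : ContinuousOn m (Icc 0 t) :=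
    (Differentiable.continuous (fun s => (hdm s).differentiableAt)).continuousOn
  have hder : ∀ x ∈ Ico (0:ℝ) t, HasDerivWithinAt m 0 (Ici x) x := by
    intro x hx
    have h0 : HasDerivAt m 0 x := by
      have hval := (hdm x).deriv
      have hz := mean_deriv_zero hu hρ huper hρper heq1 hx.1
      rw [← hm] at hz
      rw [hz] at hval
      rw [hval]
      exact hdm x
    exact h0.hasDerivWithinAt
  exact constant_of_has_deriv_right_zero hcont hder t ⟨ht, le_rfl⟩

lemma energy_deriv_zero
    (hu : ContDiff ℝ (⊤ : ℕ∞) (uncurry u)) (hρ : ContDiff ℝ (⊤ : ℕ∞) (uncurry ρ))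
    (huper : ∀ t x : ℝ, u t (x + 1) = u t x) (hρper : ∀ t x : ℝ, ρ t (x + 1) = ρ t x)
    (heq1 : ∀ t x : ℝ, 0 ≤ t →
      deriv (fun s => ∫ y in (0:ℝ)..1, u s y) t
        - deriv (fun s => deriv (deriv (u s)) x) t
      = 2 * (∫ y in (0:ℝ)..1, u t y) * deriv (u t) x
        - 2 * deriv (u t) x * deriv (deriv (u t)) x
        - u t x * deriv (deriv (deriv (u t))) x
        + ρ t x * deriv (ρ t) x
        - γ * deriv (deriv (deriv (u t))) x)
    (heq2 : ∀ t x : ℝ, 0 ≤ t →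
      deriv (fun s => ρ s x) t
      = deriv (fun y => ρ t y * u t y) x + γ * deriv (ρ t) x)
    {t : ℝ} (ht : 0 ≤ t) :
    HasDerivAt (fun s => ∫ y in (0:ℝ)..1, ((deriv (u s) y)^2 + (ρ s y)^2)) 0 t := by
  have hux : ContDiff ℝ (⊤ : ℕ∞) (uncurry (fun a b => deriv (u a) b)) := pd2_contDiff hu
  have huxx : ContDiff ℝ (⊤ : ℕ∞) (uncurry (fun a b => deriv (deriv (u a)) b)) :=
    pd2_contDiff hux
  have hcu : ∀ s, ContDiff ℝ 1 (u s) := fun s => (slice2_contDiff hu s).of_le inf2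
  have hcux : ∀ s, ContDiff ℝ 1 (deriv (u s)) := fun s => (slice2_contDiff hux s).of_le inf2
  have hcuxx : ∀ s, ContDiff ℝ 1 (deriv (deriv (u s))) :=
    fun s => (slice2_contDiff huxx s).of_le inf2
  have hcρ : ∀ s, ContDiff ℝ 1 (ρ s) := fun s => (slice2_contDiff hρ s).of_le inf2
  have hpux : ∀ s x, deriv (u s) (x+1) = deriv (u s) x := fun s => per_deriv (huper s)
  have hpuxx : ∀ s x, deriv (deriv (u s)) (x+1) = deriv (deriv (u s)) x :=
    fun s => per_deriv (hpux s)
  set mt : ℝ := ∫ y in (0:ℝ)..1, u t y with hmt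
  set vt : ℝ → ℝ := fun x => deriv (fun s => deriv (u s) x) t with hvt
  set rt : ℝ → ℝ := fun x => deriv (fun s => ρ s x) t with hrt
  set wt : ℝ → ℝ := fun x => deriv (fun s => deriv (deriv (u s)) x) t with hwt
  -- the parametric integral has derivative ∫ (2 u_x v + 2 ρ ρ_t)
  have hFsm : ContDiff ℝ (⊤ : ℕ∞)
      (uncurry (fun a b => (deriv (u a) b)^2 + (ρ a b)^2)) := (hux.pow 2).add (hρ.pow 2)
  have hE := hasDerivAt_param_int (F := fun a b => (deriv (u a) b)^2 + (ρ a b)^2) hFsm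
    (pd1_contDiff hFsm).continuous t
  have hptw : ∀ y : ℝ, deriv (fun s => (deriv (u s) y)^2 + (ρ s y)^2) t
      = 2 * deriv (u t) y * vt y + 2 * ρ t y * rt y := by
    intro y
    have hd1 : HasDerivAt (fun s => deriv (u s) y) (vt y) t :=
      (((slice1_contDiff hux y).differentiable inf3) t).hasDerivAt
    have hd2 : HasDerivAt (fun s => ρ s y) (rt y) t :=
      (((slice1_contDiff hρ y).differentiable inf3) t).hasDerivAt
    have h := (hd1.pow 2).add (hd2.pow 2)
    refine h.deriv.trans ?_
    ring
  rw [intervalIntegral.integral_congr (fun y _ => hptw y)] at hE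
  -- continuity facts
  have hvtc : Continuous vt := cont_slice2 (pd1_contDiff hux).continuous t
  have hrtc : Continuous rt := cont_slice2 (pd1_contDiff hρ).continuous t
  have hwtc : Continuous wt := cont_slice2 (pd1_contDiff huxx).continuous t
  have hvtC1 : ContDiff ℝ 1 vt := (slice2_contDiff (pd1_contDiff hux) t).of_le inf2
  have hvtper : ∀ y, vt (y+1) = vt y := by
    intro y
    have h1 : (fun s => deriv (u s) (y+1)) = (fun s => deriv (u s) y) :=
      funext fun s => per_deriv (huper s) y
    simp only [hvt, h1]
  -- split the integral
  have hsplit : (∫ y in (0:ℝ)..1, (2 * deriv (u t) y * vt y + 2 * ρ t y * rt y))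
      = (∫ y in (0:ℝ)..1, 2 * deriv (u t) y * vt y)
        + ∫ y in (0:ℝ)..1, 2 * ρ t y * rt y := by
    apply intervalIntegral.integral_add
    · exact ((continuous_const.mul ((hcux t).continuous)).mul hvtc).intervalIntegrable _ _
    · exact ((continuous_const.mul ((hcρ t).continuous)).mul hrtc).intervalIntegrable _ _
  -- integrate the first term by parts and use Clairaut
  have hibp : (∫ y in (0:ℝ)..1, 2 * deriv (u t) y * vt y)
      = -∫ y in (0:ℝ)..1, 2 * (u t y * wt y) := by
    have h1 : (∫ y in (0:ℝ)..1, 2 * deriv (u t) y * vt y)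
        = 2 * ∫ y in (0:ℝ)..1, deriv (u t) y * vt y := by
      rw [← intervalIntegral.integral_const_mul]
      exact intervalIntegral.integral_congr (fun y _ => by ring)
    have h2 : (∫ y in (0:ℝ)..1, deriv (u t) y * vt y)
        = -∫ y in (0:ℝ)..1, u t y * deriv vt y :=
      ibp_per (hcu t) hvtC1 (huper t) hvtper
    have h3 : (∫ y in (0:ℝ)..1, u t y * deriv vt y)
        = ∫ y in (0:ℝ)..1, u t y * wt y := by
      apply intervalIntegral.integral_congr
      intro y _
      show u t y * deriv vt y = u t y * wt y
      have hc := clairaut (g := fun a b => deriv (u a) b) hux t y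
      rw [show deriv vt y = deriv (fun x' => deriv (fun s => deriv (u s) x') t) y from rfl, hc]
    rw [h1, h2, h3,
      show (∫ y in (0:ℝ)..1, 2*(u t y * wt y)) = 2 * ∫ y in (0:ℝ)..1, u t y * wt y
        from intervalIntegral.integral_const_mul 2 _]
    ring
  -- single integral form
  have hmerge : (∫ y in (0:ℝ)..1, (2 * deriv (u t) y * vt y + 2 * ρ t y * rt y))
      = ∫ y in (0:ℝ)..1, (2 * ρ t y * rt y - 2 * (u t y * wt y)) := by
    rw [hsplit, hibp]
    rw [intervalIntegral.integral_sub (f := fun y => 2 * ρ t y * rt y) (g := fun y => 2 * (u t y * wt y))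
      ((continuous_const.mul ((hcρ t).continuous)).mul hrtc |>.intervalIntegrable _ _)
      ((continuous_const.mul (((hcu t).continuous).mul hwtc)).intervalIntegrable _ _)]
    ring
  -- the PDE facts
  have hz : deriv (fun s => ∫ y in (0:ℝ)..1, u s y) t = 0 :=
    mean_deriv_zero hu hρ huper hρper heq1 ht
  have hwtR : ∀ x, wt x = -(2 * mt * deriv (u t) x
      - 2 * deriv (u t) x * deriv (deriv (u t)) x
      - u t x * deriv (deriv (deriv (u t))) x
      + ρ t x * deriv (ρ t) x
      - γ * deriv (deriv (deriv (u t))) x) := by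
    intro x
    have h := heq1 t x ht
    rw [hz] at h
    simp only [hwt, hmt] at *
    linarith
  -- antiderivative G
  set G : ℝ → ℝ := fun x => 2*mt*(u t x)^2 - 2*(u t x)^2*deriv (deriv (u t)) x
      + 2*(ρ t x)^2*u t x + γ*(ρ t x)^2 - 2*γ*(u t x * deriv (deriv (u t)) x)
      + γ*(deriv (u t) x)^2 with hG
  have hptw2 : ∀ x, 2 * ρ t x * rt x - 2 * (u t x * wt x) = deriv G x := by
    intro x
    have hu' : HasDerivAt (u t) (deriv (u t) x) x :=
      (((hcu t).differentiable one_ne_zero) x).hasDerivAt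
    have hux' : HasDerivAt (deriv (u t)) (deriv (deriv (u t)) x) x :=
      (((hcux t).differentiable one_ne_zero) x).hasDerivAt
    have huxx' : HasDerivAt (deriv (deriv (u t))) (deriv (deriv (deriv (u t))) x) x :=
      (((hcuxx t).differentiable one_ne_zero) x).hasDerivAt
    have hρ' : HasDerivAt (ρ t) (deriv (ρ t) x) x :=
      (((hcρ t).differentiable one_ne_zero) x).hasDerivAt
    have hprod : deriv (fun y => ρ t y * u t y) x
        = deriv (ρ t) x * u t x + ρ t x * deriv (u t) x := (hρ'.mul hu').deriv
    have hGd : HasDerivAt G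
        (2*mt*(2*u t x*deriv (u t) x)
          - ((2*(2*u t x*deriv (u t) x))*deriv (deriv (u t)) x
            + 2*(u t x)^2*deriv (deriv (deriv (u t))) x)
          + ((2*(2*ρ t x*deriv (ρ t) x))*u t x + 2*(ρ t x)^2*deriv (u t) x)
          + γ*(2*ρ t x*deriv (ρ t) x)
          - 2*γ*(deriv (u t) x*deriv (deriv (u t)) x + u t x*deriv (deriv (deriv (u t))) x)
          + γ*(2*deriv (u t) x*deriv (deriv (u t)) x)) x := by
      have h := (((((((hu'.pow 2).const_mul (2*mt)).sub
        (((hu'.pow 2).const_mul 2).mul huxx')).add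
        (((hρ'.pow 2).const_mul 2).mul hu')).add
        ((hρ'.pow 2).const_mul γ)).sub
        ((hu'.mul huxx').const_mul (2*γ))).add
        ((hux'.pow 2).const_mul γ))
      refine h.congr_deriv ?_
      push_cast; simp only [Pi.pow_apply]; ring
    rw [hGd.deriv]
    simp only [hrt]
    rw [heq2 t x ht, hprod, hwtR x]
    ring
  have hGC1 : ContDiff ℝ 1 G := by
    exact (((((contDiff_const.mul ((hcu t).pow 2)).sub
      ((contDiff_const.mul ((hcu t).pow 2)).mul (hcuxx t))).add
      ((contDiff_const.mul ((hcρ t).pow 2)).mul (hcu t))).add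
      (contDiff_const.mul ((hcρ t).pow 2))).sub
      (contDiff_const.mul ((hcu t).mul (hcuxx t)))).add
      (contDiff_const.mul ((hcux t).pow 2))
  have hGper : ∀ x, G (x+1) = G x := by
    intro x
    simp only [hG]
    rw [huper t x, hρper t x, hpuxx t x, hpux t x]
  have hGint : (∫ x in (0:ℝ)..1, deriv G x) = 0 := integral_deriv_per hGC1 hGper
  have hfinal : (∫ y in (0:ℝ)..1, (2 * deriv (u t) y * vt y + 2 * ρ t y * rt y)) = 0 := by
    rw [hmerge, intervalIntegral.integral_congr (fun x _ => hptw2 x), hGint]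
  rwa [hfinal] at hE

lemma energy_const
    (hu : ContDiff ℝ (⊤ : ℕ∞) (uncurry u)) (hρ : ContDiff ℝ (⊤ : ℕ∞) (uncurry ρ))
    (huper : ∀ t x : ℝ, u t (x + 1) = u t x) (hρper : ∀ t x : ℝ, ρ t (x + 1) = ρ t x)
    (heq1 : ∀ t x : ℝ, 0 ≤ t →
      deriv (fun s => ∫ y in (0:ℝ)..1, u s y) t
        - deriv (fun s => deriv (deriv (u s)) x) t
      = 2 * (∫ y in (0:ℝ)..1, u t y) * deriv (u t) x
        - 2 * deriv (u t) x * deriv (deriv (u t)) x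
        - u t x * deriv (deriv (deriv (u t))) x
        + ρ t x * deriv (ρ t) x
        - γ * deriv (deriv (deriv (u t))) x)
    (heq2 : ∀ t x : ℝ, 0 ≤ t →
      deriv (fun s => ρ s x) t
      = deriv (fun y => ρ t y * u t y) x + γ * deriv (ρ t) x)
    {t : ℝ} (ht : 0 ≤ t) :
    (∫ y in (0:ℝ)..1, ((deriv (u t) y)^2 + (ρ t y)^2))
      = ∫ y in (0:ℝ)..1, ((deriv (u 0) y)^2 + (ρ 0 y)^2) := by
  set E : ℝ → ℝ := fun s => ∫ y in (0:ℝ)..1, ((deriv (u s) y)^2 + (ρ s y)^2) with hE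
  have hux : ContDiff ℝ (⊤ : ℕ∞) (uncurry (fun a b => deriv (u a) b)) := pd2_contDiff hu
  have hFsm : ContDiff ℝ (⊤ : ℕ∞)
      (uncurry (fun a b => (deriv (u a) b)^2 + (ρ a b)^2)) := (hux.pow 2).add (hρ.pow 2)
  have hdm : ∀ s, HasDerivAt E
      (∫ y in (0:ℝ)..1, deriv (fun s' => (deriv (u s') y)^2 + (ρ s' y)^2) s) s :=
    fun s => hasDerivAt_param_int (F := fun a b => (deriv (u a) b)^2 + (ρ a b)^2) hFsm
      (pd1_contDiff hFsm).continuous s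
  have hcont : ContinuousOn E (Icc 0 t) :=
    (Differentiable.continuous (fun s => (hdm s).differentiableAt)).continuousOn
  have hder : ∀ x ∈ Ico (0:ℝ) t, HasDerivWithinAt E 0 (Ici x) x := fun x hx =>
    (energy_deriv_zero hu hρ huper hρper heq1 heq2 hx.1).hasDerivWithinAt
  exact constant_of_has_deriv_right_zero hcont hder t ⟨ht, le_rfl⟩

end system

theorem stmt_15
    (γ : ℝ) (u ρ : ℝ → ℝ → ℝ) (μ₀ μ₁ : ℝ)
    (hu : ContDiff ℝ (⊤ : ℕ∞) (Function.uncurry u))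
    (hρ : ContDiff ℝ (⊤ : ℕ∞) (Function.uncurry ρ))
    (huper : ∀ t x : ℝ, u t (x + 1) = u t x)
    (hρper : ∀ t x : ℝ, ρ t (x + 1) = ρ t x)
    (heq1 : ∀ t x : ℝ, 0 ≤ t →
      deriv (fun s => ∫ y in (0:ℝ)..1, u s y) t
        - deriv (fun s => deriv (deriv (u s)) x) t
      = 2 * (∫ y in (0:ℝ)..1, u t y) * deriv (u t) x
        - 2 * deriv (u t) x * deriv (deriv (u t)) x
        - u t x * deriv (deriv (deriv (u t))) x
        + ρ t x * deriv (ρ t) x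
        - γ * deriv (deriv (deriv (u t))) x)
    (heq2 : ∀ t x : ℝ, 0 ≤ t →
      deriv (fun s => ρ s x) t
      = deriv (fun y => ρ t y * u t y) x + γ * deriv (ρ t) x)
    (hμ₀ : μ₀ = ∫ y in (0:ℝ)..1, u 0 y)
    (hμ₁ : μ₁ = Real.sqrt (∫ y in (0:ℝ)..1, ((deriv (u 0) y) ^ 2 + (ρ 0 y) ^ 2)))
    : ∀ t : ℝ, 0 ≤ t → ∀ φ : ℝ → ℝ, ContDiff ℝ 1 φ → (∀ x, φ (x + 1) = φ x) →
      (∫ y in (0:ℝ)..1, ((φ y) ^ 2 + (deriv φ y) ^ 2)) ≤ 1 →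
      |∫ x in (0:ℝ)..1, deriv (fun s => ρ s x) t * φ x| ≤ (|μ₀| + Real.sqrt 3 / 6 * μ₁ + |γ|) * μ₁ := by
  intro t ht φ hφ hφper hφnorm
  have hux : ContDiff ℝ (⊤ : ℕ∞) (uncurry (fun a b => deriv (u a) b)) := pd2_contDiff hu
  have hcu : ∀ s, ContDiff ℝ 1 (u s) := fun s => (slice2_contDiff hu s).of_le inf2
  have hcux : ∀ s, ContDiff ℝ 1 (deriv (u s)) := fun s => (slice2_contDiff hux s).of_le inf2
  have hcρ : ∀ s, ContDiff ℝ 1 (ρ s) := fun s => (slice2_contDiff hρ s).of_le inf2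
  have hφc : Continuous φ := hφ.continuous
  have hφ'c : Continuous (deriv φ) := hφ.continuous_deriv le_rfl
  -- Step 1 : rewrite the integral via the second equation and integrate by parts
  set pr : ℝ → ℝ := fun y => ρ t y * u t y with hpr
  have hprC1 : ContDiff ℝ 1 pr := (hcρ t).mul (hcu t)
  have hprper : ∀ x, pr (x+1) = pr x := by
    intro x; simp only [hpr]; rw [hρper t x, huper t x]
  have hstep1 : (∫ x in (0:ℝ)..1, deriv (fun s => ρ s x) t * φ x)
      = -∫ x in (0:ℝ)..1, (ρ t x * (u t x + γ)) * deriv φ x := by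
    have h1 : (∫ x in (0:ℝ)..1, deriv (fun s => ρ s x) t * φ x)
        = ∫ x in (0:ℝ)..1, (deriv pr x * φ x + γ * (deriv (ρ t) x * φ x)) := by
      apply intervalIntegral.integral_congr
      intro x _
      show deriv (fun s => ρ s x) t * φ x = _
      rw [heq2 t x ht]
      ring
    have h2 : (∫ x in (0:ℝ)..1, (deriv pr x * φ x + γ * (deriv (ρ t) x * φ x)))
        = (∫ x in (0:ℝ)..1, deriv pr x * φ x)
          + γ * ∫ x in (0:ℝ)..1, deriv (ρ t) x * φ x := by
      rw [intervalIntegral.integral_add (f := fun x => deriv pr x * φ x) (g := fun x => γ * (deriv (ρ t) x * φ x))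
        (((hprC1.continuous_deriv le_rfl).mul hφc).intervalIntegrable _ _)
        ((continuous_const.mul (((hcρ t).continuous_deriv le_rfl).mul hφc)).intervalIntegrable _ _),
        intervalIntegral.integral_const_mul]
    have h3 : (∫ x in (0:ℝ)..1, deriv pr x * φ x) = -∫ x in (0:ℝ)..1, pr x * deriv φ x :=
      ibp_per hprC1 hφ hprper hφper
    have h4 : (∫ x in (0:ℝ)..1, deriv (ρ t) x * φ x) = -∫ x in (0:ℝ)..1, ρ t x * deriv φ x :=
      ibp_per (hcρ t) hφ (hρper t) hφper
    rw [h1, h2, h3, h4]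
    rw [show (∫ x in (0:ℝ)..1, (ρ t x * (u t x + γ)) * deriv φ x)
        = (∫ x in (0:ℝ)..1, (pr x * deriv φ x + γ * (ρ t x * deriv φ x))) from
      intervalIntegral.integral_congr (fun x _ => by simp only [hpr]; ring)]
    rw [intervalIntegral.integral_add (f := fun x => pr x * deriv φ x) (g := fun x => γ * (ρ t x * deriv φ x))
      ((hprC1.continuous.mul hφ'c).intervalIntegrable _ _)
      ((continuous_const.mul ((hcρ t).continuous.mul hφ'c)).intervalIntegrable _ _),
      intervalIntegral.integral_const_mul]
    ring
  -- Step 2 : quantities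
  set M : ℝ := |μ₀| + Real.sqrt 3 / 6 * μ₁ + |γ| with hM
  have hμ₁nn : 0 ≤ μ₁ := hμ₁ ▸ Real.sqrt_nonneg _
  have hMnn : 0 ≤ M := by
    have h3 : 0 ≤ Real.sqrt 3 / 6 * μ₁ := by positivity
    have h4 := abs_nonneg μ₀; have h5 := abs_nonneg γ
    rw [hM]; linarith
  have hE0nn : 0 ≤ ∫ y in (0:ℝ)..1, ((deriv (u 0) y) ^ 2 + (ρ 0 y) ^ 2) :=
    intervalIntegral.integral_nonneg zero_le_one
      (fun y _ => add_nonneg (sq_nonneg _) (sq_nonneg _))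
  have hμ₁sq : μ₁^2 = ∫ y in (0:ℝ)..1, ((deriv (u 0) y) ^ 2 + (ρ 0 y) ^ 2) := by
    rw [hμ₁, Real.sq_sqrt hE0nn]
  have hEconst : (∫ y in (0:ℝ)..1, ((deriv (u t) y)^2 + (ρ t y)^2))
      = ∫ y in (0:ℝ)..1, ((deriv (u 0) y)^2 + (ρ 0 y)^2) :=
    energy_const hu hρ huper hρper heq1 heq2 ht
  have hEsplit : (∫ y in (0:ℝ)..1, ((deriv (u t) y)^2 + (ρ t y)^2))
      = (∫ y in (0:ℝ)..1, (deriv (u t) y)^2) + ∫ y in (0:ℝ)..1, (ρ t y)^2 :=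
    intervalIntegral.integral_add
      ((((hcux t).continuous).pow 2).intervalIntegrable _ _)
      ((((hcρ t).continuous).pow 2).intervalIntegrable _ _)
  have huxnn : 0 ≤ ∫ y in (0:ℝ)..1, (deriv (u t) y)^2 :=
    intervalIntegral.integral_nonneg zero_le_one (fun y _ => sq_nonneg _)
  have hρnn : 0 ≤ ∫ y in (0:ℝ)..1, (ρ t y)^2 :=
    intervalIntegral.integral_nonneg zero_le_one (fun y _ => sq_nonneg _)
  have huxle : (∫ y in (0:ℝ)..1, (deriv (u t) y)^2) ≤ μ₁^2 := by
    rw [hμ₁sq, ← hEconst, hEsplit]; linarith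
  have hρle : (∫ y in (0:ℝ)..1, (ρ t y)^2) ≤ μ₁^2 := by
    rw [hμ₁sq, ← hEconst, hEsplit]; linarith
  -- Step 3 : sup bound for |u t x + γ|
  have hsup : ∀ x, |u t x + γ| ≤ M := by
    intro x
    have hmean : (∫ y in (0:ℝ)..1, u t y) = μ₀ := by
      rw [mean_const hu hρ huper hρper heq1 ht, hμ₀]
    have hs := sup_bound (hcu t) (huper t) x
    rw [hmean] at hs
    have hsq : Real.sqrt (∫ y in (0:ℝ)..1, (deriv (u t) y)^2) ≤ μ₁ := by
      have := Real.sqrt_le_sqrt huxle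
      rwa [Real.sqrt_sq hμ₁nn] at this
    have h36 : (0:ℝ) ≤ Real.sqrt 3 / 6 := by positivity
    have hs2 : |u t x - μ₀| ≤ Real.sqrt 3 / 6 * μ₁ :=
      le_trans hs (mul_le_mul_of_nonneg_left hsq h36)
    calc |u t x + γ| = |(u t x - μ₀) + μ₀ + γ| := by congr 1; ring
      _ ≤ |(u t x - μ₀) + μ₀| + |γ| := abs_add_le _ _
      _ ≤ |u t x - μ₀| + |μ₀| + |γ| := by linarith [abs_add_le (u t x - μ₀) μ₀]
      _ ≤ M := by rw [hM]; linarith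
  -- Step 4 : Cauchy-Schwarz
  set f : ℝ → ℝ := fun x => ρ t x * (u t x + γ) with hf
  have hfc : Continuous f := (hcρ t).continuous.mul (((hcu t).continuous).add continuous_const)
  have hcs := cauchy_schwarz_int (f := f) (g := deriv φ) zero_le_one hfc hφ'c
  have hf2 : (∫ x in (0:ℝ)..1, f x^2) ≤ M^2 * μ₁^2 := by
    have hptw : ∀ x ∈ Icc (0:ℝ) 1, f x^2 ≤ M^2 * (ρ t x)^2 := by
      intro x _
      have h := hsup x
      have h2 : (u t x + γ)^2 ≤ M^2 :=
        sq_le_sq' (abs_le.1 h).1 (abs_le.1 h).2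
      simp only [hf]
      calc (ρ t x * (u t x + γ))^2 = (ρ t x)^2 * (u t x + γ)^2 := by ring
        _ ≤ (ρ t x)^2 * M^2 := mul_le_mul_of_nonneg_left h2 (sq_nonneg _)
        _ = M^2 * (ρ t x)^2 := by ring
    have hmono : (∫ x in (0:ℝ)..1, f x^2) ≤ ∫ x in (0:ℝ)..1, M^2 * (ρ t x)^2 :=
      intervalIntegral.integral_mono_on zero_le_one
        ((hfc.pow 2).intervalIntegrable _ _)
        ((continuous_const.mul (((hcρ t).continuous).pow 2)).intervalIntegrable _ _) hptw
    rw [intervalIntegral.integral_const_mul] at hmono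
    calc (∫ x in (0:ℝ)..1, f x^2) ≤ M^2 * ∫ x in (0:ℝ)..1, (ρ t x)^2 := hmono
      _ ≤ M^2 * μ₁^2 := mul_le_mul_of_nonneg_left hρle (sq_nonneg M)
  have hg2 : (∫ x in (0:ℝ)..1, (deriv φ x)^2) ≤ 1 := by
    have hsp : (∫ y in (0:ℝ)..1, ((φ y) ^ 2 + (deriv φ y) ^ 2))
        = (∫ y in (0:ℝ)..1, (φ y)^2) + ∫ y in (0:ℝ)..1, (deriv φ y)^2 :=
      intervalIntegral.integral_add
        ((hφc.pow 2).intervalIntegrable _ _) ((hφ'c.pow 2).intervalIntegrable _ _)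
    have hφ2nn : 0 ≤ ∫ y in (0:ℝ)..1, (φ y)^2 :=
      intervalIntegral.integral_nonneg zero_le_one (fun y _ => sq_nonneg _)
    rw [hsp] at hφnorm
    linarith
  have hg2nn : 0 ≤ ∫ x in (0:ℝ)..1, (deriv φ x)^2 :=
    intervalIntegral.integral_nonneg zero_le_one (fun y _ => sq_nonneg _)
  have hf2nn : 0 ≤ ∫ x in (0:ℝ)..1, f x^2 :=
    intervalIntegral.integral_nonneg zero_le_one (fun y _ => sq_nonneg _)
  -- Step 5 : conclude
  rw [hstep1, abs_neg]
  have hIsq : (∫ x in (0:ℝ)..1, f x * deriv φ x)^2 ≤ (M * μ₁)^2 := by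
    calc (∫ x in (0:ℝ)..1, f x * deriv φ x)^2
        ≤ (∫ x in (0:ℝ)..1, f x^2) * (∫ x in (0:ℝ)..1, (deriv φ x)^2) := hcs
      _ ≤ (M^2 * μ₁^2) * 1 :=
          mul_le_mul hf2 hg2 hg2nn (by positivity)
      _ = (M * μ₁)^2 := by ring
  have hMμnn : 0 ≤ M * μ₁ := mul_nonneg hMnn hμ₁nn
  have := Real.sqrt_le_sqrt hIsq
  rw [Real.sqrt_sq_eq_abs, Real.sqrt_sq hMμnn] at this
  exact this
end

section
/- Let (u, ρ) be a smooth solution of the periodic two-component μ-Hunter-Saxton system on [0,∞). Then for every T > 0, (∫₀ᵀ ∫₀¹ ((u(t,x)+γ) u_x(t,x))² dx dt)^{1/2} ≤ (|μ₀| + (√3/6) μ₁ + |γ|) μ₁ √T. -/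
open MeasureTheory Real Set Filter Function

set_option maxHeartbeats 1000000
open MeasureTheory Real Set Filter Function

noncomputable def pd1 (F : ℝ → ℝ → ℝ) (t x : ℝ) : ℝ :=
  fderiv ℝ (Function.uncurry F) (t, x) (1, 0)

noncomputable def pd2 (F : ℝ → ℝ → ℝ) (t x : ℝ) : ℝ :=
  fderiv ℝ (Function.uncurry F) (t, x) (0, 1)

variable {F : ℝ → ℝ → ℝ}

lemma HS.hasDerivAt_pd1 (hF : ContDiff ℝ (⊤ : ℕ∞) (Function.uncurry F)) (t x : ℝ) :
    HasDerivAt (fun s => F s x) (pd1 F t x) t := by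
  have h1 : HasFDerivAt (Function.uncurry F) (fderiv ℝ (Function.uncurry F) (t, x)) (t, x) :=
    (hF.differentiable (by simp) (t, x)).hasFDerivAt
  have h2 : HasDerivAt (fun s : ℝ => (s, x)) ((1 : ℝ), (0 : ℝ)) t :=
    (hasDerivAt_id t).prodMk (hasDerivAt_const t x)
  exact h1.comp_hasDerivAt t h2

lemma HS.hasDerivAt_pd2 (hF : ContDiff ℝ (⊤ : ℕ∞) (Function.uncurry F)) (t x : ℝ) :
    HasDerivAt (F t) (pd2 F t x) x := by
  have h1 : HasFDerivAt (Function.uncurry F) (fderiv ℝ (Function.uncurry F) (t, x)) (t, x) :=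
    (hF.differentiable (by simp) (t, x)).hasFDerivAt
  have h2 : HasDerivAt (fun y : ℝ => (t, y)) ((0 : ℝ), (1 : ℝ)) x :=
    (hasDerivAt_const x t).prodMk (hasDerivAt_id x)
  exact h1.comp_hasDerivAt x h2

lemma HS.deriv_eq_pd2 (hF : ContDiff ℝ (⊤ : ℕ∞) (Function.uncurry F)) (t : ℝ) :
    deriv (F t) = pd2 F t := funext fun x => (HS.hasDerivAt_pd2 hF t x).deriv

lemma HS.deriv_eq_pd1 (hF : ContDiff ℝ (⊤ : ℕ∞) (Function.uncurry F)) (t x : ℝ) :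
    deriv (fun s => F s x) t = pd1 F t x := (HS.hasDerivAt_pd1 hF t x).deriv

lemma HS.contDiff_pd1 (hF : ContDiff ℝ (⊤ : ℕ∞) (Function.uncurry F)) :
    ContDiff ℝ (⊤ : ℕ∞) (Function.uncurry (pd1 F)) := by
  have : Function.uncurry (pd1 F)
      = fun p : ℝ × ℝ => fderiv ℝ (Function.uncurry F) p ((1 : ℝ), (0 : ℝ)) := rfl
  rw [this]
  exact (hF.fderiv_right (by exact_mod_cast le_top : (⊤:ℕ∞) + 1 ≤ ((⊤:ℕ∞):WithTop ℕ∞))).clm_apply contDiff_const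

lemma HS.contDiff_pd2 (hF : ContDiff ℝ (⊤ : ℕ∞) (Function.uncurry F)) :
    ContDiff ℝ (⊤ : ℕ∞) (Function.uncurry (pd2 F)) := by
  have : Function.uncurry (pd2 F)
      = fun p : ℝ × ℝ => fderiv ℝ (Function.uncurry F) p ((0 : ℝ), (1 : ℝ)) := rfl
  rw [this]
  exact (hF.fderiv_right (by exact_mod_cast le_top : (⊤:ℕ∞) + 1 ≤ ((⊤:ℕ∞):WithTop ℕ∞))).clm_apply contDiff_const

lemma HS.clairaut (hF : ContDiff ℝ (⊤ : ℕ∞) (Function.uncurry F)) (t x : ℝ) :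
    pd1 (pd2 F) t x = pd2 (pd1 F) t x := by
  have hd1 : Differentiable ℝ (fderiv ℝ (Function.uncurry F)) :=
    (hF.fderiv_right (by exact_mod_cast le_top : (⊤:ℕ∞) + 1 ≤ ((⊤:ℕ∞):WithTop ℕ∞))).differentiable (by simp)
  have hsymm := second_derivative_symmetric
    (f := Function.uncurry F) (f' := fderiv ℝ (Function.uncurry F))
    (f'' := fderiv ℝ (fderiv ℝ (Function.uncurry F)) (t, x))
    (fun y => (hF.differentiable (by simp) y).hasFDerivAt)
    ((hd1 (t, x)).hasFDerivAt)
  have h2 : pd1 (pd2 F) t x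
      = fderiv ℝ (fderiv ℝ (Function.uncurry F)) (t, x) ((1:ℝ), (0:ℝ)) ((0:ℝ), (1:ℝ)) := by
    have : Function.uncurry (pd2 F)
        = fun p : ℝ × ℝ => fderiv ℝ (Function.uncurry F) p ((0 : ℝ), (1 : ℝ)) := rfl
    show fderiv ℝ (Function.uncurry (pd2 F)) (t, x) (1, 0) = _
    rw [this, fderiv_clm_apply (hd1 (t, x)) (differentiableAt_const _)]
    simp
  have h3 : pd2 (pd1 F) t x
      = fderiv ℝ (fderiv ℝ (Function.uncurry F)) (t, x) ((0:ℝ), (1:ℝ)) ((1:ℝ), (0:ℝ)) := by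
    have : Function.uncurry (pd1 F)
        = fun p : ℝ × ℝ => fderiv ℝ (Function.uncurry F) p ((1 : ℝ), (0 : ℝ)) := rfl
    show fderiv ℝ (Function.uncurry (pd1 F)) (t, x) (0, 1) = _
    rw [this, fderiv_clm_apply (hd1 (t, x)) (differentiableAt_const _)]
    simp
  rw [h2, h3, hsymm]

-- periodicity
lemma HS.per_pd1 (hF : ContDiff ℝ (⊤ : ℕ∞) (Function.uncurry F))
    (hper : ∀ t x, F t (x + 1) = F t x) (t x : ℝ) :
    pd1 F t (x + 1) = pd1 F t x := by
  have h : (fun s => F s (x + 1)) = fun s => F s x := funext fun s => hper s x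
  rw [← HS.deriv_eq_pd1 hF t (x + 1), ← HS.deriv_eq_pd1 hF t x, h]

lemma HS.per_pd2 (hF : ContDiff ℝ (⊤ : ℕ∞) (Function.uncurry F))
    (hper : ∀ t x, F t (x + 1) = F t x) (t x : ℝ) :
    pd2 F t (x + 1) = pd2 F t x := by
  have h : (fun y => F t (y + 1)) = F t := funext fun y => hper t y
  have := deriv_comp_add_const (F t) 1 x
  rw [← HS.deriv_eq_pd2 hF t, ← this, h]

-- continuity of sections
lemma HS.cont_sec (hF : ContDiff ℝ (⊤ : ℕ∞) (Function.uncurry F)) (t : ℝ) :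
    Continuous (F t) :=
  hF.continuous.comp (continuous_const.prodMk continuous_id)

lemma HS.hasDerivAt_sec (hF : ContDiff ℝ (⊤ : ℕ∞) (Function.uncurry F)) (t x : ℝ) :
    HasDerivAt (F t) (pd2 F t x) x := HS.hasDerivAt_pd2 hF t x

-- FTC for a periodic function on [0,1]
lemma HS.integral_eq_zero {g g' : ℝ → ℝ} (hd : ∀ x, HasDerivAt g (g' x) x)
    (hc : Continuous g') (hper : g 1 = g 0) :
    ∫ x in (0:ℝ)..1, g' x = 0 := by
  rw [intervalIntegral.integral_eq_sub_of_hasDerivAt (fun x _ => hd x)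
    (hc.intervalIntegrable 0 1), hper, sub_self]

-- differentiation under the integral sign
lemma HS.hasDerivAt_param {F F' : ℝ → ℝ → ℝ} (hF : Continuous (Function.uncurry F))
    (hF' : Continuous (Function.uncurry F'))
    (hd : ∀ s y, HasDerivAt (fun r => F r y) (F' s y) s) (t : ℝ) :
    HasDerivAt (fun s => ∫ y in (0:ℝ)..1, F s y) (∫ y in (0:ℝ)..1, F' t y) t := by
  obtain ⟨C, hC⟩ : ∃ C, ∀ p ∈ Icc (t - 1) (t + 1) ×ˢ Icc (0:ℝ) 1,
      ‖Function.uncurry F' p‖ ≤ C :=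
    ((isCompact_Icc.prod isCompact_Icc).exists_bound_of_continuousOn
      hF'.continuousOn)
  have sec : ∀ (G : ℝ → ℝ → ℝ), Continuous (Function.uncurry G) → ∀ s, Continuous (G s) :=
    fun G hG s => hG.comp (continuous_const.prodMk continuous_id)
  refine (intervalIntegral.hasDerivAt_integral_of_dominated_loc_of_deriv_le
    (F := F) (F' := F') (x₀ := t) (a := 0) (b := 1) (bound := fun _ => C)
    (Metric.ball_mem_nhds t one_pos) ?_ ?_ ?_ ?_ ?_ ?_).2
  · exact Filter.Eventually.of_forall fun s => (sec F hF s).aestronglyMeasurable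
  · exact (sec F hF t).intervalIntegrable 0 1
  · exact (sec F' hF' t).aestronglyMeasurable
  · refine Filter.Eventually.of_forall fun y hy s hs => ?_
    refine hC (s, y) ⟨?_, ?_⟩
    · rcases Metric.mem_ball.1 hs with h
      have := abs_lt.1 (by simpa [Real.dist_eq] using h)
      constructor <;> linarith [this.1, this.2]
    · rw [Set.uIoc_of_le (by norm_num : (0:ℝ) ≤ 1)] at hy
      exact ⟨le_of_lt hy.1, hy.2⟩
  · exact intervalIntegrable_const
  · exact Filter.Eventually.of_forall fun y _ s _ => hd s y

lemma HS.const_of_deriv_zero {g : ℝ → ℝ} (hd : ∀ t, 0 ≤ t → HasDerivAt g 0 t)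
    {t : ℝ} (ht : 0 ≤ t) : g t = g 0 := by
  have := constant_of_has_deriv_right_zero (f := g) (a := 0) (b := t)
    (fun x hx => (hd x hx.1).continuousAt.continuousWithinAt)
    (fun x hx => (hd x hx.1).hasDerivWithinAt)
  exact this t ⟨ht, le_rfl⟩

lemma HS.poincare {f f' : ℝ → ℝ} (hd : ∀ x, HasDerivAt f (f' x) x)
    (hc : Continuous f') (hper : f 1 = f 0) {x : ℝ} (hx : x ∈ Icc (0:ℝ) 1) :
    (f x - ∫ y in (0:ℝ)..1, f y) ^ 2 ≤ 1/12 * ∫ y in (0:ℝ)..1, (f' y) ^ 2 := by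
  have hcf : Continuous f := by
    rw [continuous_iff_continuousAt]; exact fun y => (hd y).continuousAt
  set μ : ℝ := ∫ y in (0:ℝ)..1, f y with hμ
  set c : ℝ := x - 1/2 with hc'
  set I1 : ℝ := ∫ y in (0:ℝ)..x, (y - c) * f' y with hI1
  set I2 : ℝ := ∫ y in x..(1:ℝ), (y - c - 1) * f' y with hI2
  set J1 : ℝ := ∫ y in (0:ℝ)..x, (y - c) ^ 2 with hJ1
  set J2 : ℝ := ∫ y in x..(1:ℝ), (y - c - 1) ^ 2 with hJ2
  set K1 : ℝ := ∫ y in (0:ℝ)..x, (f' y) ^ 2 with hK1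
  set K2 : ℝ := ∫ y in x..(1:ℝ), (f' y) ^ 2 with hK2
  -- step 1 : I1 + I2 = f x - μ
  have intg : ∀ (a b : ℝ) (g : ℝ → ℝ), Continuous g → IntervalIntegrable g volume a b :=
    fun a b g hg => hg.intervalIntegrable a b
  have hA : ∫ y in (0:ℝ)..1, (y - c) * f' y = (1 - c) * f 1 - (0 - c) * f 0 - μ := by
    have := intervalIntegral.integral_mul_deriv_eq_deriv_mul
      (u := fun y => y - c) (u' := fun _ => (1:ℝ)) (v := f) (v' := f')
      (a := 0) (b := 1)
      (fun y _ => (hasDerivAt_id y).sub_const c)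
      (fun y _ => hd y)
      (intg 0 1 _ continuous_const) (intg 0 1 _ hc)
    rw [this, hμ]
    simp
  have hsplitA : (∫ y in (0:ℝ)..x, (y - c) * f' y) + ∫ y in x..(1:ℝ), (y - c) * f' y
      = ∫ y in (0:ℝ)..1, (y - c) * f' y :=
    intervalIntegral.integral_add_adjacent_intervals
      (intg 0 x _ (by fun_prop)) (intg x 1 _ (by fun_prop))
  have hI2' : I2 = (∫ y in x..(1:ℝ), (y - c) * f' y) - ∫ y in x..(1:ℝ), f' y := by
    rw [hI2, ← intervalIntegral.integral_sub (intg x 1 _ (by fun_prop)) (intg x 1 _ hc)]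
    congr 1; ext y; ring
  have hFTC2 : ∫ y in x..(1:ℝ), f' y = f 1 - f x :=
    intervalIntegral.integral_eq_sub_of_hasDerivAt (fun y _ => hd y) (intg x 1 _ hc)
  have step1 : I1 + I2 = f x - μ := by
    rw [hI2', hFTC2, hI1, hper]
    rw [hper] at hA
    have h2 : (∫ y in (0:ℝ)..x, (y - c) * f' y) + ∫ y in x..(1:ℝ), (y - c) * f' y
        = f 0 - μ := by rw [hsplitA, hA]; ring
    linarith [h2]
  -- step 2 : J1 + J2 = 1/12
  have hJ1v : J1 = ((x - c) ^ 3 - (0 - c) ^ 3) / 3 := by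
    rw [hJ1]
    rw [intervalIntegral.integral_eq_sub_of_hasDerivAt
      (f := fun y => (y - c) ^ 3 / 3) (f' := fun y => (y - c) ^ 2)
      (fun y _ => by
        have h1 : HasDerivAt (fun y : ℝ => (y - c) ^ 3 / 3)
            ((3 : ℕ) * (y - c) ^ 2 * 1 / 3) y :=
          (((hasDerivAt_id y).sub_const c).pow 3).div_const 3
        convert h1 using 1 <;> first | rfl | ring)
      (intg 0 x _ (by fun_prop))]
    ring
  have hJ2v : J2 = ((1 - c - 1) ^ 3 - (x - c - 1) ^ 3) / 3 := by
    rw [hJ2]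
    rw [intervalIntegral.integral_eq_sub_of_hasDerivAt
      (f := fun y => (y - c - 1) ^ 3 / 3) (f' := fun y => (y - c - 1) ^ 2)
      (fun y _ => by
        have h1 : HasDerivAt (fun y : ℝ => (y - c - 1) ^ 3 / 3)
            ((3 : ℕ) * (y - c - 1) ^ 2 * 1 / 3) y :=
          ((((hasDerivAt_id y).sub_const c).sub_const 1).pow 3).div_const 3
        convert h1 using 1 <;> first | rfl | ring)
      (intg x 1 _ (by fun_prop))]
    ring
  have step2 : J1 + J2 = 1/12 := by
    rw [hJ1v, hJ2v, hc']; ring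
  -- step 3 : Cauchy-Schwarz via discriminant
  have hQ : ∀ lam : ℝ, 0 ≤ (J1 + J2) * (lam * lam) + 2 * (I1 + I2) * lam + (K1 + K2) := by
    intro lam
    have e1 : ∫ y in (0:ℝ)..x, (lam * (y - c) + f' y) ^ 2
        = J1 * lam ^ 2 + 2 * I1 * lam + K1 := by
      rw [hJ1, hI1, hK1]
      rw [show (fun y => (lam * (y - c) + f' y) ^ 2)
          = fun y => lam ^ 2 * (y - c) ^ 2 + (2 * lam) * ((y - c) * f' y) + (f' y) ^ 2 by
        ext y; ring]
      rw [intervalIntegral.integral_add (by exact (intg 0 x _ (by fun_prop)))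
          (intg 0 x _ (by fun_prop)),
        intervalIntegral.integral_add (intg 0 x _ (by fun_prop))
          (intg 0 x _ (by fun_prop)),
        intervalIntegral.integral_const_mul, intervalIntegral.integral_const_mul]
      ring
    have e2 : ∫ y in x..(1:ℝ), (lam * (y - c - 1) + f' y) ^ 2
        = J2 * lam ^ 2 + 2 * I2 * lam + K2 := by
      rw [hJ2, hI2, hK2]
      rw [show (fun y => (lam * (y - c - 1) + f' y) ^ 2)
          = fun y => lam ^ 2 * (y - c - 1) ^ 2 + (2 * lam) * ((y - c - 1) * f' y) + (f' y) ^ 2 by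
        ext y; ring]
      rw [intervalIntegral.integral_add (by exact (intg x 1 _ (by fun_prop)))
          (intg x 1 _ (by fun_prop)),
        intervalIntegral.integral_add (intg x 1 _ (by fun_prop))
          (intg x 1 _ (by fun_prop)),
        intervalIntegral.integral_const_mul, intervalIntegral.integral_const_mul]
      ring
    have p1 : 0 ≤ ∫ y in (0:ℝ)..x, (lam * (y - c) + f' y) ^ 2 :=
      intervalIntegral.integral_nonneg hx.1 (fun y _ => sq_nonneg _)
    have p2 : 0 ≤ ∫ y in x..(1:ℝ), (lam * (y - c - 1) + f' y) ^ 2 :=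
      intervalIntegral.integral_nonneg hx.2 (fun y _ => sq_nonneg _)
    nlinarith [p1, p2, e1, e2]
  have hdis := discrim_le_zero hQ
  rw [discrim] at hdis
  -- step 4 : combine
  have hK : K1 + K2 = ∫ y in (0:ℝ)..1, (f' y) ^ 2 :=
    intervalIntegral.integral_add_adjacent_intervals
      (intg 0 x _ (by fun_prop)) (intg x 1 _ (by fun_prop))
  have hJnn : 0 ≤ J1 + J2 := by rw [step2]; norm_num
  have hKnn : 0 ≤ K1 + K2 := by
    have := intervalIntegral.integral_nonneg (μ := volume) (by norm_num : (0:ℝ) ≤ 1)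
      (fun y _ => sq_nonneg (f' y))
    rw [← hK] at this; exact this
  rw [step2] at hdis
  rw [← step1, ← hK]
  nlinarith [hdis]


theorem stmt_16
    (γ : ℝ) (u ρ : ℝ → ℝ → ℝ) (μ₀ μ₁ : ℝ)
    (hu : ContDiff ℝ (⊤ : ℕ∞) (Function.uncurry u))
    (hρ : ContDiff ℝ (⊤ : ℕ∞) (Function.uncurry ρ))
    (huper : ∀ t x : ℝ, u t (x + 1) = u t x)
    (hρper : ∀ t x : ℝ, ρ t (x + 1) = ρ t x)
    (heq1 : ∀ t x : ℝ, 0 ≤ t →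
      deriv (fun s => ∫ y in (0:ℝ)..1, u s y) t
        - deriv (fun s => deriv (deriv (u s)) x) t
      = 2 * (∫ y in (0:ℝ)..1, u t y) * deriv (u t) x
        - 2 * deriv (u t) x * deriv (deriv (u t)) x
        - u t x * deriv (deriv (deriv (u t))) x
        + ρ t x * deriv (ρ t) x
        - γ * deriv (deriv (deriv (u t))) x)
    (heq2 : ∀ t x : ℝ, 0 ≤ t →
      deriv (fun s => ρ s x) t
      = deriv (fun y => ρ t y * u t y) x + γ * deriv (ρ t) x)
    (hμ₀ : μ₀ = ∫ y in (0:ℝ)..1, u 0 y)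
    (hμ₁ : μ₁ = Real.sqrt (∫ y in (0:ℝ)..1, ((deriv (u 0) y) ^ 2 + (ρ 0 y) ^ 2)))
    : ∀ T : ℝ, 0 < T →
      Real.sqrt (∫ t in (0:ℝ)..T, ∫ x in (0:ℝ)..1, ((u t x + γ) * deriv (u t) x) ^ 2)
      ≤ (|μ₀| + Real.sqrt 3 / 6 * μ₁ + |γ|) * μ₁ * Real.sqrt T := by
  intro T hT
  -- smoothness of partial derivatives
  have hw : ContDiff ℝ (⊤:ℕ∞) (Function.uncurry (pd2 u)) := HS.contDiff_pd2 hu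
  have hw2 : ContDiff ℝ (⊤:ℕ∞) (Function.uncurry (pd2 (pd2 u))) := HS.contDiff_pd2 hw
  have hw3 : ContDiff ℝ (⊤:ℕ∞) (Function.uncurry (pd2 (pd2 (pd2 u)))) := HS.contDiff_pd2 hw2
  have hv : ContDiff ℝ (⊤:ℕ∞) (Function.uncurry (pd1 u)) := HS.contDiff_pd1 hu
  have hwt : ContDiff ℝ (⊤:ℕ∞) (Function.uncurry (pd1 (pd2 u))) := HS.contDiff_pd1 hw
  have hwtx : ContDiff ℝ (⊤:ℕ∞) (Function.uncurry (pd2 (pd1 (pd2 u)))) := HS.contDiff_pd2 hwt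
  have hr1 : ContDiff ℝ (⊤:ℕ∞) (Function.uncurry (pd2 ρ)) := HS.contDiff_pd2 hρ
  have hrt : ContDiff ℝ (⊤:ℕ∞) (Function.uncurry (pd1 ρ)) := HS.contDiff_pd1 hρ
  -- rewriting derivs as partial derivatives
  have e2 : ∀ t, deriv (u t) = pd2 u t := HS.deriv_eq_pd2 hu
  have e22 : ∀ t, deriv (pd2 u t) = pd2 (pd2 u) t := HS.deriv_eq_pd2 hw
  have e222 : ∀ t, deriv (pd2 (pd2 u) t) = pd2 (pd2 (pd2 u)) t := HS.deriv_eq_pd2 hw2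
  have eρ : ∀ t, deriv (ρ t) = pd2 ρ t := HS.deriv_eq_pd2 hρ
  simp only [e2] at hμ₁
  -- the mean μf and energy Ef
  set μf : ℝ → ℝ := fun s => ∫ y in (0:ℝ)..1, u s y with hμf
  set Ef : ℝ → ℝ := fun s => ∫ y in (0:ℝ)..1, ((pd2 u s y)^2 + (ρ s y)^2) with hEf
  have hμd : ∀ t, HasDerivAt μf (∫ y in (0:ℝ)..1, pd1 u t y) t := fun t =>
    HS.hasDerivAt_param hu.continuous hv.continuous (fun s y => HS.hasDerivAt_pd1 hu s y) t
  -- restated equations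
  have heq1' : ∀ t x : ℝ, 0 ≤ t → pd1 (pd2 (pd2 u)) t x
      = deriv μf t - (2*μf t*pd2 u t x - 2*pd2 u t x*pd2 (pd2 u) t x
        - u t x*pd2 (pd2 (pd2 u)) t x + ρ t x*pd2 ρ t x - γ*pd2 (pd2 (pd2 u)) t x) := by
    intro t x ht
    have h := heq1 t x ht
    simp only [e2, e22, e222, eρ] at h
    rw [HS.deriv_eq_pd1 hw2 t x] at h
    have hm : (∫ y in (0:ℝ)..1, u t y) = μf t := rfl
    rw [hm] at h
    linarith [h]
  have heq2' : ∀ t x : ℝ, 0 ≤ t → pd1 ρ t x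
      = (pd2 ρ t x * u t x + ρ t x * pd2 u t x) + γ * pd2 ρ t x := by
    intro t x ht
    have h := heq2 t x ht
    simp only [eρ] at h
    rw [HS.deriv_eq_pd1 hρ t x] at h
    have hm : deriv (fun y => ρ t y * u t y) x
        = pd2 ρ t x * u t x + ρ t x * pd2 u t x :=
      ((HS.hasDerivAt_pd2 hρ t x).mul (HS.hasDerivAt_pd2 hu t x)).deriv
    rw [hm] at h
    exact h
  -- periodicity facts
  have p01 : ∀ (G : ℝ → ℝ → ℝ), (∀ t x, G t (x+1) = G t x) → ∀ t, G t 1 = G t 0 :=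
    fun G h t => by simpa using h t 0
  have perw : ∀ t x, pd2 u t (x+1) = pd2 u t x := fun t x => HS.per_pd2 hu huper t x
  have perw2 : ∀ t x, pd2 (pd2 u) t (x+1) = pd2 (pd2 u) t x :=
    fun t x => HS.per_pd2 hw perw t x
  have perwt : ∀ t x, pd1 (pd2 u) t (x+1) = pd1 (pd2 u) t x :=
    fun t x => HS.per_pd1 hw perw t x
  -- ∫ R1 = 0 : the continuity proof of R1 sections, reused
  have cR1 : ∀ t : ℝ, Continuous (fun x => 2*μf t*pd2 u t x - 2*pd2 u t x*pd2 (pd2 u) t x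
      - u t x*pd2 (pd2 (pd2 u)) t x + ρ t x*pd2 ρ t x - γ*pd2 (pd2 (pd2 u)) t x) := by
    intro t
    have c1 := HS.cont_sec hu t
    have c2 := HS.cont_sec hw t
    have c3 := HS.cont_sec hw2 t
    have c4 := HS.cont_sec hw3 t
    have c5 := HS.cont_sec hρ t
    have c6 := HS.cont_sec hr1 t
    exact ((((continuous_const.mul c2).sub ((continuous_const.mul c2).mul c3)).sub
      (c1.mul c4)).add (c5.mul c6)).sub (continuous_const.mul c4)
  have hΨ : ∀ t : ℝ, ∫ x in (0:ℝ)..1, (2*μf t*pd2 u t x - 2*pd2 u t x*pd2 (pd2 u) t x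
      - u t x*pd2 (pd2 (pd2 u)) t x + ρ t x*pd2 ρ t x - γ*pd2 (pd2 (pd2 u)) t x) = 0 := by
    intro t
    refine HS.integral_eq_zero
      (g := fun x => 2*μf t*u t x - pd2 u t x*pd2 u t x
        - (u t x*pd2 (pd2 u) t x - pd2 u t x*pd2 u t x/2) + ρ t x*ρ t x/2
        - γ*pd2 (pd2 u) t x) ?_ (cR1 t) ?_
    · intro x
      have h1 := HS.hasDerivAt_pd2 hu t x
      have h2 := HS.hasDerivAt_pd2 hw t x
      have h3 := HS.hasDerivAt_pd2 hw2 t x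
      have h4 := HS.hasDerivAt_pd2 hρ t x
      have hg := ((((HasDerivAt.const_mul (2*μf t) h1).sub (h2.mul h2)).sub
        ((h1.mul h3).sub ((h2.mul h2).div_const 2))).add ((h4.mul h4).div_const 2)).sub
        (HasDerivAt.const_mul γ h3)
      convert hg using 1 <;> try rfl
      ring
    · have q1 := p01 u huper t
      have q2 := p01 _ perw t
      have q3 := p01 _ perw2 t
      have q4 := p01 ρ hρper t
      simp only [q1, q2, q3, q4]
  -- μ is constant
  have hμ0' : ∀ t : ℝ, 0 ≤ t → HasDerivAt μf 0 t := by
    intro t ht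
    have hz1 : ∫ x in (0:ℝ)..1, pd2 (pd1 (pd2 u)) t x = 0 :=
      HS.integral_eq_zero (fun x => HS.hasDerivAt_pd2 hwt t x) (HS.cont_sec hwtx t)
        (p01 _ perwt t)
    have key : ∫ x in (0:ℝ)..1, pd1 (pd2 (pd2 u)) t x = deriv μf t := by
      rw [intervalIntegral.integral_congr (g := fun x => deriv μf t
        - (2*μf t*pd2 u t x - 2*pd2 u t x*pd2 (pd2 u) t x
          - u t x*pd2 (pd2 (pd2 u)) t x + ρ t x*pd2 ρ t x - γ*pd2 (pd2 (pd2 u)) t x))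
        (fun x _ => heq1' t x ht)]
      rw [intervalIntegral.integral_sub intervalIntegrable_const
        ((cR1 t).intervalIntegrable 0 1), hΨ t]
      simp
    have hz2 : ∫ x in (0:ℝ)..1, pd1 (pd2 (pd2 u)) t x = 0 := by
      rw [intervalIntegral.integral_congr (g := fun x => pd2 (pd1 (pd2 u)) t x)
        (fun x _ => HS.clairaut hw t x)]
      exact hz1
    have hd0 : deriv μf t = 0 := by rw [← key, hz2]
    have h := hμd t
    have hv0 : (∫ y in (0:ℝ)..1, pd1 u t y) = 0 := by rw [← h.deriv]; exact hd0
    rw [hv0] at h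
    exact h
  have hμ0v : ∀ t : ℝ, 0 ≤ t → μf t = μ₀ := by
    intro t ht
    rw [HS.const_of_deriv_zero hμ0' ht, hμ₀]
  -- energy is constant
  have hEd : ∀ t, HasDerivAt Ef
      (∫ y in (0:ℝ)..1, (2*pd2 u t y*pd1 (pd2 u) t y + 2*ρ t y*pd1 ρ t y)) t := by
    intro t
    rw [hEf]
    refine HS.hasDerivAt_param (F := fun s y => (pd2 u s y)^2 + (ρ s y)^2)
      (F' := fun s y => 2*pd2 u s y*pd1 (pd2 u) s y + 2*ρ s y*pd1 ρ s y) ?_ ?_ ?_ t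
    · exact ((hw.continuous.pow 2).add (hρ.continuous.pow 2))
    · exact (((continuous_const.mul hw.continuous).mul hwt.continuous).add
        ((continuous_const.mul hρ.continuous).mul hrt.continuous))
    · intro s y
      have h1 := HS.hasDerivAt_pd1 hw s y
      have h2 := HS.hasDerivAt_pd1 hρ s y
      have hg := (h1.pow 2).add (h2.pow 2)
      convert hg using 1 <;> try rfl
      push_cast
      ring
  have hE0' : ∀ t : ℝ, 0 ≤ t → HasDerivAt Ef 0 t := by
    intro t ht
    have hz : ∫ y in (0:ℝ)..1, (2*pd2 u t y*pd1 (pd2 u) t y + 2*ρ t y*pd1 ρ t y) = 0 := by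
      refine HS.integral_eq_zero
        (g := fun x => 2*(u t x * pd1 (pd2 u) t x
          + (μf t*(u t x*u t x) - u t x*u t x*pd2 (pd2 u) t x + u t x*(ρ t x*ρ t x)
            - γ*(u t x*pd2 (pd2 u) t x - pd2 u t x*pd2 u t x/2) + γ*(ρ t x*ρ t x/2)))) ?_ ?_ ?_
      · intro x
        have h1 := HS.hasDerivAt_pd2 hu t x
        have h2 := HS.hasDerivAt_pd2 hw t x
        have h3 := HS.hasDerivAt_pd2 hw2 t x
        have h4 := HS.hasDerivAt_pd2 hρ t x
        have h5 := HS.hasDerivAt_pd2 hwt t x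
        have hii : pd2 (pd1 (pd2 u)) t x
            = 0 - (2*μf t*pd2 u t x - 2*pd2 u t x*pd2 (pd2 u) t x
              - u t x*pd2 (pd2 (pd2 u)) t x + ρ t x*pd2 ρ t x - γ*pd2 (pd2 (pd2 u)) t x) := by
          rw [← HS.clairaut hw t x, heq1' t x ht, (hμ0' t ht).deriv]
        have hiii := heq2' t x ht
        have hg := HasDerivAt.const_mul 2 ((h1.mul h5).add
          ((((((h1.mul h1).const_mul (μf t)).sub ((h1.mul h1).mul h3)).add
            (h1.mul (h4.mul h4))).sub
            (HasDerivAt.const_mul γ ((h1.mul h3).sub ((h2.mul h2).div_const 2)))).add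
            (HasDerivAt.const_mul γ ((h4.mul h4).div_const 2))))
        convert hg using 1 <;> try rfl
        rw [hii, hiii]; simp only [Pi.mul_apply]
        ring
      · exact (((continuous_const.mul (HS.cont_sec hw t)).mul (HS.cont_sec hwt t)).add
          ((continuous_const.mul (HS.cont_sec hρ t)).mul (HS.cont_sec hrt t)))
      · have q1 := p01 u huper t
        have q2 := p01 _ perw t
        have q3 := p01 _ perw2 t
        have q4 := p01 ρ hρper t
        have q5 := p01 _ perwt t
        simp only [q1, q2, q3, q4, q5]
    have h := hEd t
    rw [hz] at h
    exact h
  have hEconst : ∀ t : ℝ, 0 ≤ t → Ef t = Ef 0 :=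
    fun t ht => HS.const_of_deriv_zero hE0' ht
  -- numeric facts
  have hμ₁nn : 0 ≤ μ₁ := hμ₁ ▸ Real.sqrt_nonneg _
  have hEf0 : Ef 0 = ∫ y in (0:ℝ)..1, ((pd2 u 0 y)^2 + (ρ 0 y)^2) := rfl
  have hX : 0 ≤ ∫ y in (0:ℝ)..1, ((pd2 u 0 y)^2 + (ρ 0 y)^2) :=
    intervalIntegral.integral_nonneg (μ := volume) (by norm_num) (fun y _ => by positivity)
  have hμ₁sq : μ₁^2 = Ef 0 := by
    rw [hμ₁, Real.sq_sqrt hX, hEf0]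
  set C : ℝ := |μ₀| + Real.sqrt 3 / 6 * μ₁ + |γ| with hC
  have hCnn : 0 ≤ C := by
    rw [hC]
    have : 0 ≤ Real.sqrt 3 / 6 * μ₁ := mul_nonneg (by positivity) hμ₁nn
    positivity
  -- the inner space integral bound
  have hinner : ∀ t : ℝ, 0 ≤ t →
      (∫ x in (0:ℝ)..1, ((u t x + γ)*pd2 u t x)^2) ≤ C^2*μ₁^2 := by
    intro t ht
    have cw := HS.cont_sec hw t
    have cu := HS.cont_sec hu t
    have cρ := HS.cont_sec hρ t
    have hwint : ∫ x in (0:ℝ)..1, (pd2 u t x)^2 ≤ μ₁^2 := by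
      have h1 : ∫ x in (0:ℝ)..1, (pd2 u t x)^2 ≤ Ef t := by
        have hEft : Ef t = ∫ y in (0:ℝ)..1, ((pd2 u t y)^2 + (ρ t y)^2) := rfl
        rw [hEft]
        refine intervalIntegral.integral_mono_on (by norm_num)
          ((cw.pow 2).intervalIntegrable 0 1)
          (((cw.pow 2).add (cρ.pow 2)).intervalIntegrable 0 1) ?_
        intro y _
        nlinarith [sq_nonneg (ρ t y)]
      have h2 : Ef t = μ₁^2 := by rw [hEconst t ht, ← hμ₁sq]
      linarith
    have hpoint : ∀ x ∈ Icc (0:ℝ) 1, ((u t x + γ)*pd2 u t x)^2 ≤ C^2*(pd2 u t x)^2 := by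
      intro x hx
      have hpb := HS.poincare (f := u t) (f' := pd2 u t)
        (fun y => HS.hasDerivAt_pd2 hu t y) cw (p01 u huper t) hx
      have hm : (∫ y in (0:ℝ)..1, u t y) = μ₀ := hμ0v t ht
      rw [hm] at hpb
      have hsup : (u t x - μ₀)^2 ≤ 1/12*μ₁^2 := by nlinarith [hwint]
      have h3 : 0 ≤ Real.sqrt 3 / 6 * μ₁ := mul_nonneg (by positivity) hμ₁nn
      have hs2 : (Real.sqrt 3 / 6 * μ₁)^2 = 1/12*μ₁^2 := by
        have h33 : Real.sqrt 3 ^ 2 = 3 := Real.sq_sqrt (by norm_num)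
        rw [mul_pow, div_pow, h33]
        ring
      have hdle : |u t x - μ₀| ≤ Real.sqrt 3 / 6 * μ₁ := by
        rw [← Real.sqrt_sq_eq_abs, ← Real.sqrt_sq h3]
        exact Real.sqrt_le_sqrt (by nlinarith [hsup, hs2])
      have h4 : |u t x + γ| ≤ C := by
        rw [hC, show u t x + γ = (u t x - μ₀) + μ₀ + γ by ring]
        calc |(u t x - μ₀) + μ₀ + γ| ≤ |u t x - μ₀| + |μ₀| + |γ| := abs_add_three _ _ _
          _ ≤ |μ₀| + Real.sqrt 3 / 6 * μ₁ + |γ| := by linarith [hdle]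
      have habs : (u t x + γ)^2 ≤ C^2 := by
        have := pow_le_pow_left₀ (abs_nonneg (u t x + γ)) h4 2
        rwa [sq_abs] at this
      calc ((u t x + γ)*pd2 u t x)^2 = (u t x + γ)^2*(pd2 u t x)^2 := by ring
        _ ≤ C^2*(pd2 u t x)^2 := mul_le_mul_of_nonneg_right habs (sq_nonneg _)
    calc (∫ x in (0:ℝ)..1, ((u t x + γ)*pd2 u t x)^2)
        ≤ ∫ x in (0:ℝ)..1, C^2*(pd2 u t x)^2 := by
          refine intervalIntegral.integral_mono_on (by norm_num)
            ((((cu.add continuous_const).mul cw).pow 2).intervalIntegrable 0 1)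
            ((continuous_const.mul (cw.pow 2)).intervalIntegrable 0 1) hpoint
      _ = C^2 * ∫ x in (0:ℝ)..1, (pd2 u t x)^2 :=
          intervalIntegral.integral_const_mul _ _
      _ ≤ C^2*μ₁^2 := mul_le_mul_of_nonneg_left hwint (by positivity)
  -- smoothness and continuity of the outer integrand
  have hHsm : ContDiff ℝ (⊤:ℕ∞)
      (Function.uncurry (fun t x => ((u t x + γ)*pd2 u t x)^2)) :=
    ((hu.add contDiff_const).mul hw).pow 2
  have hIcont : Continuous (fun t => ∫ x in (0:ℝ)..1, ((u t x + γ)*pd2 u t x)^2) := by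
    rw [continuous_iff_continuousAt]
    intro t
    exact (HS.hasDerivAt_param hHsm.continuous (HS.contDiff_pd1 hHsm).continuous
      (fun s y => HS.hasDerivAt_pd1 hHsm s y) t).continuousAt
  have houter : (∫ t in (0:ℝ)..T, ∫ x in (0:ℝ)..1, ((u t x + γ)*pd2 u t x)^2)
      ≤ C^2*μ₁^2*T := by
    calc (∫ t in (0:ℝ)..T, ∫ x in (0:ℝ)..1, ((u t x + γ)*pd2 u t x)^2)
        ≤ ∫ _t in (0:ℝ)..T, C^2*μ₁^2 :=
          intervalIntegral.integral_mono_on (le_of_lt hT)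
            (hIcont.intervalIntegrable 0 T) intervalIntegrable_const
            (fun t ht' => hinner t ht'.1)
      _ = C^2*μ₁^2*T := by
          rw [intervalIntegral.integral_const]
          simp [mul_comm]
  -- conclusion
  simp only [e2]
  calc Real.sqrt (∫ t in (0:ℝ)..T, ∫ x in (0:ℝ)..1, ((u t x + γ)*pd2 u t x)^2)
      ≤ Real.sqrt (C^2*μ₁^2*T) := Real.sqrt_le_sqrt houter
    _ = C*μ₁*Real.sqrt T := by
        rw [show C^2*μ₁^2*T = (C*μ₁)^2*T by ring, Real.sqrt_mul (sq_nonneg _),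
          Real.sqrt_sq (mul_nonneg hCnn hμ₁nn)]
end
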